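/- arXiv:1911.03227 — 5 statements merged into one kernel-verified Lean document; each statement's English description precedes it below -/
import Mathlib

section
/- Let Γ = Γ(G, (G_i)_{i∈I}) be a coset incidence geometry over I, fix i ∈ I and let J ⊆ I ∖ {i}. Then G is transitive on the set of flags of type {i} ∪ J if and only if G is transitive on the set of flags of type J and ⋂_{j∈J} G_i G_j = G_i G_J. -/
open scoped Pointwise

namespace ChiralGeom

/-- An incidence system `(X, *, t, I)`: a set of elements `X`, a type function `t : X → I`,
and a reflexive symmetric incidence relation such that distinct elements of the same type
are never incident. -/
structure IncidenceSystem (X : Type*) (I : Type*) where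
  t : X → I
  inc : X → X → Prop
  inc_refl : ∀ x, inc x x
  inc_symm : ∀ x y, inc x y → inc y x
  eq_of_inc_of_t_eq : ∀ x y, inc x y → t x = t y → x = y

namespace IncidenceSystem

variable {X I : Type*} (Γ : IncidenceSystem X I)

/-- A flag is a set of pairwise incident elements. -/
def IsFlag (F : Set X) : Prop := ∀ x ∈ F, ∀ y ∈ F, Γ.inc x y

/-- A chamber is a flag of type `I` (containing elements of every type). -/
def IsChamber (C : Set X) : Prop := Γ.IsFlag C ∧ Γ.t '' C = Set.univ

/-- `Γ` is a geometry when every flag is contained in a chamber. -/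
def IsGeometry : Prop := ∀ F : Set X, Γ.IsFlag F → ∃ C : Set X, Γ.IsChamber C ∧ F ⊆ C

/-- The elements of the residue of a flag `F`: elements not in `F` incident to
every element of `F`. -/
def ResidueElt (F : Set X) : Type _ := {x : X // x ∉ F ∧ ∀ y ∈ F, Γ.inc x y}

/-- The residue of a flag `F`, an incidence system over `I ∖ t(F)`. -/
def residue (F : Set X) : IncidenceSystem (Γ.ResidueElt F) {i : I // i ∉ Γ.t '' F} where
  t x := ⟨Γ.t x.1, by
    rintro ⟨y, hy, hty⟩
    exact x.2.1 (by
      rw [Γ.eq_of_inc_of_t_eq x.1 y (x.2.2 y hy) hty.symm]; exact hy)⟩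
  inc x y := Γ.inc x.1 y.1
  inc_refl x := Γ.inc_refl x.1
  inc_symm x y h := Γ.inc_symm _ _ h
  eq_of_inc_of_t_eq x y h ht :=
    Subtype.ext (Γ.eq_of_inc_of_t_eq _ _ h (congrArg Subtype.val ht))

/-- `Γ` is connected when its incidence graph is connected. -/
def Connected : Prop := ∀ x y : X, Relation.ReflTransGen Γ.inc x y

/-- `Γ` is residually connected when every residue of rank at least two
(including `Γ` itself, the residue of the empty flag) is connected. -/
def ResiduallyConnected : Prop :=
  ∀ F : Set X, Γ.IsFlag F → ({i : I | i ∉ Γ.t '' F}).Nontrivial → (Γ.residue F).Connected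

/-- `Γ` is firm when every residue of rank one has at least two elements. -/
def IsFirm : Prop :=
  ∀ F : Set X, Γ.IsFlag F → (∃ i : I, {i' : I | i' ∉ Γ.t '' F} = {i}) →
    ∃ x y : Γ.ResidueElt F, x ≠ y

/-- `Γ` is thin when every residue of rank one has exactly two elements. -/
def IsThin : Prop :=
  ∀ F : Set X, Γ.IsFlag F → (∃ i : I, {i' : I | i' ∉ Γ.t '' F} = {i}) →
    ∃ x y : Γ.ResidueElt F, x ≠ y ∧ ∀ z : Γ.ResidueElt F, z = x ∨ z = y

/-- A type-preserving automorphism: a permutation of the elements preserving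
incidence and types. -/
def IsAut (e : Equiv.Perm X) : Prop :=
  (∀ x y, Γ.inc x y ↔ Γ.inc (e x) (e y)) ∧ ∀ x, Γ.t (e x) = Γ.t x

/-- Two sets of elements (e.g. chambers) in the same orbit of `Aut_I(Γ)`. -/
def SameOrbit (C C' : Set X) : Prop := ∃ e : Equiv.Perm X, Γ.IsAut e ∧ e '' C = C'

/-- Two chambers are adjacent when they differ in exactly one element. -/
def Adjacent (C C' : Set X) : Prop :=
  Γ.IsChamber C ∧ Γ.IsChamber C' ∧
    ∃ x ∈ C, ∃ y ∈ C', x ≠ y ∧ C \ {x} = C' \ {y}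

/-- `Γ` is chiral when `Aut_I(Γ)` has exactly two orbits on chambers,
and adjacent chambers always lie in distinct orbits. -/
def IsChiral : Prop :=
  (∃ C₁ C₂ : Set X, Γ.IsChamber C₁ ∧ Γ.IsChamber C₂ ∧ ¬ Γ.SameOrbit C₁ C₂ ∧
      ∀ C : Set X, Γ.IsChamber C → Γ.SameOrbit C₁ C ∨ Γ.SameOrbit C₂ C) ∧
  ∀ C C' : Set X, Γ.Adjacent C C' → ¬ Γ.SameOrbit C C'

end IncidenceSystem

section Coset

variable {G : Type*} [Group G] {ι : Type*}

/-- The elements of the coset incidence system: pairs `(i, S)` where `S` is a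
(left) coset `g Gᵢ`. -/
abbrev CosetElt (Gs : ι → Subgroup G) : Type _ :=
  {p : ι × Set G // ∃ g : G, p.2 = ({g} : Set G) * (Gs p.1 : Set G)}

lemma mem_singleton_mul_self {H : Subgroup G} (a : G) : a ∈ ({a} : Set G) * (H : Set G) :=
  ⟨a, rfl, 1, H.one_mem, mul_one a⟩

lemma singleton_mul_subgroup_eq {H : Subgroup G} {a b : G}
    (h : ((({a} : Set G) * (H : Set G)) ∩ (({b} : Set G) * (H : Set G))).Nonempty) :
    ({a} : Set G) * (H : Set G) = ({b} : Set G) * (H : Set G) := by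
  obtain ⟨x, hx1, hx2⟩ := h
  obtain ⟨a', ha', h1, hh1, hxa⟩ := Set.mem_mul.mp hx1
  obtain ⟨b', hb', h2, hh2, hxb⟩ := Set.mem_mul.mp hx2
  clear hx1 hx2
  obtain rfl : a = a' := ha'.symm
  obtain rfl : b = b' := hb'.symm
  have key : a * h1 = b * h2 := hxa.trans hxb.symm
  have e1 : b⁻¹ * (a * h1) = h2 := by rw [key, inv_mul_cancel_left]
  have e : b⁻¹ * a = h2 * h1⁻¹ := by rw [← e1]; group
  have hba : b⁻¹ * a ∈ H := e ▸ H.mul_mem hh2 (H.inv_mem hh1)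
  ext y
  simp only [Set.mem_mul, Set.mem_singleton_iff, exists_eq_left]
  constructor
  · rintro ⟨z, hz, rfl⟩
    exact ⟨(b⁻¹ * a) * z, H.mul_mem hba hz, by group⟩
  · rintro ⟨z, hz, rfl⟩
    exact ⟨(a⁻¹ * b) * z, H.mul_mem (by simpa using H.inv_mem hba) hz, by group⟩

/-- The coset incidence system `Γ(G; (Gᵢ)_{i∈ι})` : elements are the cosets `g Gᵢ`,
the type of `g Gᵢ` is `i`, and two cosets are incident iff they meet. -/
def cosetSystem (Gs : ι → Subgroup G) : IncidenceSystem (CosetElt Gs) ι where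
  t p := p.1.1
  inc p q := (p.1.2 ∩ q.1.2).Nonempty
  inc_refl p := by
    obtain ⟨g, hg⟩ := p.2
    exact ⟨g, by rw [Set.inter_self, hg]; exact mem_singleton_mul_self g⟩
  inc_symm p q h := by
    obtain ⟨x, hx1, hx2⟩ := h
    exact ⟨x, hx2, hx1⟩
  eq_of_inc_of_t_eq p q h ht := by
    obtain ⟨a, ha⟩ := p.2
    obtain ⟨b, hb⟩ := q.2
    have ht' : p.1.1 = q.1.1 := ht
    apply Subtype.ext
    apply Prod.ext ht'
    show p.1.2 = q.1.2
    have hb2 : q.1.2 = ({b} : Set G) * (Gs p.1.1 : Set G) := by rw [hb, ht']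
    rw [ha, hb2]
    apply singleton_mul_subgroup_eq
    rw [← ha, ← hb2]
    exact h

/-- The coset `g Gᵢ` as an element of the coset incidence system. -/
def mkElt (Gs : ι → Subgroup G) (i : ι) (g : G) : CosetElt Gs :=
  ⟨(i, ({g} : Set G) * (Gs i : Set G)), ⟨g, rfl⟩⟩

/-- The identity coset `Gᵢ` as an element of the coset incidence system. -/
def idElt (Gs : ι → Subgroup G) (i : ι) : CosetElt Gs :=
  ⟨(i, (Gs i : Set G)), ⟨1, by rw [Set.singleton_one, one_mul]⟩⟩

/-- The action of `g ∈ G` on the coset incidence system by multiplication. -/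
def actElt (Gs : ι → Subgroup G) (g : G) (x : CosetElt Gs) : CosetElt Gs :=
  ⟨(x.1.1, ({g} : Set G) * x.1.2), by
    obtain ⟨a, ha⟩ := x.2
    exact ⟨g * a, by rw [ha, ← mul_assoc, Set.singleton_mul_singleton]⟩⟩

/-- `G` is transitive on the set of flags of type `J` of the coset incidence system. -/
def flagTransitiveOn (Gs : ι → Subgroup G) (J : Set ι) : Prop :=
  ∀ F F' : Set (CosetElt Gs), (cosetSystem Gs).IsFlag F → (cosetSystem Gs).IsFlag F' →
    (cosetSystem Gs).t '' F = J → (cosetSystem Gs).t '' F' = J →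
    ∃ g : G, (actElt Gs g) '' F = F'

/-- The parabolic subgroup `G_J := ⋂_{j ∈ J} G_j`. -/
def interSub (Gs : ι → Subgroup G) (J : Set ι) : Subgroup G := ⨅ j ∈ J, Gs j

/-- The flag `{G_j : j ∈ J}` of identity cosets. -/
def baseFlag (Gs : ι → Subgroup G) (J : Set ι) : Set (CosetElt Gs) :=
  {x | ∃ j ∈ J, x = idElt Gs j}

/-- The family of subgroups `(G_{J ∪ {i}})_{i ∈ I ∖ J}` of `G_J`. -/
def resFamily (Gs : ι → Subgroup G) (J : Set ι) :
    {i : ι // i ∉ J} → Subgroup (interSub Gs J) :=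
  fun i => (interSub Gs (insert i.1 J)).subgroupOf (interSub Gs J)

lemma interSub_le {Gs : ι → Subgroup G} {J : Set ι} {j : ι} (hj : j ∈ J) :
    interSub Gs J ≤ Gs j := by
  intro x hx
  simp only [interSub, Subgroup.mem_iInf] at hx
  exact hx j hj

/-- The canonical homomorphism `φ_J` from the coset incidence system
`Γ(G_J, (G_{J∪{i}})_{i ∈ I∖J})` to the residue of the flag `{G_j : j ∈ J}`,
given by `φ_J (a G_{J∪{i}}) = a G_i` for `a ∈ G_J`. -/
noncomputable def phi (Gs : ι → Subgroup G) (J : Set ι)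
    (x : CosetElt (resFamily Gs J)) :
    (cosetSystem Gs).ResidueElt (baseFlag Gs J) :=
  ⟨mkElt Gs x.1.1.1 (x.2.choose : G), by
    constructor
    · rintro ⟨j, hj, hEq⟩
      have : x.1.1.1 = j := congrArg (fun y : CosetElt Gs => y.1.1) hEq
      exact x.1.1.2 (this ▸ hj)
    · rintro y ⟨j, hj, rfl⟩
      refine ⟨(x.2.choose : G), mem_singleton_mul_self _, ?_⟩
      exact interSub_le hj (x.2.choose).2⟩

end Coset

section CPlus

variable {G : Type*} [Group G]

/-- The subgroup `G⁺_J := ⟨α_i⁻¹ α_j : i, j ∈ J⟩`. -/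
def GJc (α : ℕ → G) (J : Set ℕ) : Subgroup G :=
  Subgroup.closure {g | ∃ i ∈ J, ∃ j ∈ J, g = (α i)⁻¹ * α j}

/-- `(G, {α_1, …, α_{r-1}})` is a C⁺-group: `α_0 = 1`, the `α_j` (`1 ≤ j ≤ r-1`)
generate `G`, and the intersection condition IC⁺ holds. -/
def IsCPlusGroup (r : ℕ) (α : ℕ → G) : Prop :=
  α 0 = 1 ∧
  Subgroup.closure {g | ∃ j : ℕ, 1 ≤ j ∧ j < r ∧ g = α j} = ⊤ ∧
  ∀ J K : Set ℕ, J ⊆ Set.Iio r → K ⊆ Set.Iio r → J.Nontrivial → K.Nontrivial →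
    GJc α J ⊓ GJc α K = GJc α (J ∩ K)

/-- The maximal parabolic subgroups: `G₀⁺ = ⟨α_1⁻¹ α_j : j ≥ 2⟩` and
`G_i⁺ = ⟨α_j : j ≠ i⟩` for `i ≥ 1`. -/
def maxParab (r : ℕ) (α : ℕ → G) (i : ℕ) : Subgroup G :=
  if i = 0 then Subgroup.closure {g | ∃ j : ℕ, 2 ≤ j ∧ j < r ∧ g = (α 1)⁻¹ * α j}
  else Subgroup.closure {g | ∃ j : ℕ, 1 ≤ j ∧ j < r ∧ j ≠ i ∧ g = α j}

/-- The family `(G_i⁺)_{i ∈ {0,…,r-1}}` of maximal parabolic subgroups of a C⁺-group. -/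
def cplusFamily (r : ℕ) (α : ℕ → G) : Fin r → Subgroup G := fun i => maxParab r α i.1

end CPlus



section AuxProof

variable {G ι : Type*} [Group G] {Gs : ι → Subgroup G}

lemma mem_singleton_mul_iff {A : Set G} {g x : G} :
    x ∈ ({g} : Set G) * A ↔ g⁻¹ * x ∈ A := by
  simp only [Set.mem_mul, Set.mem_singleton_iff, exists_eq_left]
  constructor
  · rintro ⟨z, hz, rfl⟩; simpa using hz
  · intro h; exact ⟨g⁻¹ * x, h, by group⟩

lemma mkElt_eq_iff {j : ι} {a b : G} :
    mkElt Gs j a = mkElt Gs j b ↔ a⁻¹ * b ∈ Gs j := by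
  constructor
  · intro h
    have hset : ({a} : Set G) * (Gs j : Set G) = ({b} : Set G) * (Gs j : Set G) :=
      congrArg (fun x : CosetElt Gs => x.1.2) h
    have hb : b ∈ ({a} : Set G) * (Gs j : Set G) := hset ▸ mem_singleton_mul_self b
    exact mem_singleton_mul_iff.mp hb
  · intro h
    apply Subtype.ext; refine Prod.ext rfl ?_
    exact singleton_mul_subgroup_eq
      ⟨b, mem_singleton_mul_iff.mpr h, mem_singleton_mul_self b⟩

lemma inc_mkElt_iff {j k : ι} {a b : G} :
    (cosetSystem Gs).inc (mkElt Gs j a) (mkElt Gs k b) ↔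
      a⁻¹ * b ∈ (Gs j : Set G) * (Gs k : Set G) := by
  show ((({a} : Set G) * (Gs j : Set G)) ∩ (({b} : Set G) * (Gs k : Set G))).Nonempty ↔ _
  constructor
  · rintro ⟨x, hx1, hx2⟩
    rw [mem_singleton_mul_iff] at hx1 hx2
    refine ⟨a⁻¹ * x, hx1, (b⁻¹ * x)⁻¹, (Gs k).inv_mem hx2, by group⟩
  · rintro ⟨p, hp, q, hq, hpq⟩
    have hpq' : p * q = a⁻¹ * b := hpq
    refine ⟨a * p, mem_singleton_mul_iff.mpr (by simpa using hp), mem_singleton_mul_iff.mpr ?_⟩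
    have hb : b = a * (p * q) := by rw [hpq']; group
    have : b⁻¹ * (a * p) = q⁻¹ := by rw [hb]; group
    rw [this]; exact (Gs k).inv_mem hq

lemma actElt_mkElt (g : G) (j : ι) (a : G) :
    actElt Gs g (mkElt Gs j a) = mkElt Gs j (g * a) := by
  apply Subtype.ext; refine Prod.ext rfl ?_
  show ({g} : Set G) * (({a} : Set G) * (Gs j : Set G)) = ({g * a} : Set G) * (Gs j : Set G)
  rw [← mul_assoc, Set.singleton_mul_singleton]

lemma exists_mkElt (x : CosetElt Gs) : ∃ g, x = mkElt Gs ((cosetSystem Gs).t x) g := by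
  obtain ⟨g, hg⟩ := x.2
  exact ⟨g, Subtype.ext (Prod.ext rfl hg)⟩

lemma actElt_mul (g h : G) (x : CosetElt Gs) :
    actElt Gs (g * h) x = actElt Gs g (actElt Gs h x) := by
  apply Subtype.ext; refine Prod.ext rfl ?_
  show ({g * h} : Set G) * x.1.2 = ({g} : Set G) * (({h} : Set G) * x.1.2)
  rw [← mul_assoc, Set.singleton_mul_singleton]

lemma actElt_one (x : CosetElt Gs) : actElt Gs 1 x = x := by
  apply Subtype.ext; refine Prod.ext rfl ?_
  show ({1} : Set G) * x.1.2 = x.1.2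
  rw [Set.singleton_one, one_mul]

lemma inc_actElt (g : G) (x y : CosetElt Gs) :
    (cosetSystem Gs).inc (actElt Gs g x) (actElt Gs g y) ↔ (cosetSystem Gs).inc x y := by
  show ((({g} : Set G) * x.1.2) ∩ (({g} : Set G) * y.1.2)).Nonempty ↔ (x.1.2 ∩ y.1.2).Nonempty
  constructor
  · rintro ⟨z, hz1, hz2⟩
    rw [mem_singleton_mul_iff] at hz1 hz2
    exact ⟨g⁻¹ * z, hz1, hz2⟩
  · rintro ⟨z, hz1, hz2⟩
    exact ⟨g * z, mem_singleton_mul_iff.mpr (by simpa using hz1),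
      mem_singleton_mul_iff.mpr (by simpa using hz2)⟩

lemma isFlag_image (g : G) {F : Set (CosetElt Gs)} (hF : (cosetSystem Gs).IsFlag F) :
    (cosetSystem Gs).IsFlag (actElt Gs g '' F) := by
  rintro _ ⟨x, hx, rfl⟩ _ ⟨y, hy, rfl⟩
  exact (inc_actElt g x y).mpr (hF x hx y hy)

lemma t_actElt (g : G) (x : CosetElt Gs) :
    (cosetSystem Gs).t (actElt Gs g x) = (cosetSystem Gs).t x := rfl

lemma t_image_act (g : G) (F : Set (CosetElt Gs)) :
    (cosetSystem Gs).t '' (actElt Gs g '' F) = (cosetSystem Gs).t '' F := by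
  rw [← Set.image_comp]
  rfl

lemma jpart_image (g : G) (F : Set (CosetElt Gs)) (J : Set ι) :
    {x ∈ actElt Gs g '' F | (cosetSystem Gs).t x ∈ J}
      = actElt Gs g '' {x ∈ F | (cosetSystem Gs).t x ∈ J} := by
  ext x
  simp only [Set.mem_setOf_eq, Set.mem_image]
  constructor
  · rintro ⟨⟨y, hy, rfl⟩, ht⟩; exact ⟨y, ⟨hy, ht⟩, rfl⟩
  · rintro ⟨y, ⟨hy, ht⟩, rfl⟩; exact ⟨⟨y, hy, rfl⟩, ht⟩

lemma image_act_act (g h : G) (F : Set (CosetElt Gs)) :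
    actElt Gs g '' (actElt Gs h '' F) = actElt Gs (g * h) '' F := by
  rw [Set.image_image]
  exact Set.image_congr fun x _ => (actElt_mul g h x).symm

lemma image_act_one (F : Set (CosetElt Gs)) : actElt Gs 1 '' F = F :=
  (Set.image_congr fun x _ => actElt_one x).trans (Set.image_id F)

lemma mem_interSub_iff {J : Set ι} {x : G} :
    x ∈ interSub Gs J ↔ ∀ j ∈ J, x ∈ Gs j := by
  simp [interSub, Subgroup.mem_iInf]

end AuxProof

/-- In a coset geometry `Γ(G, (Gᵢ))`, `G` is transitive on the flags
of type `{i} ∪ J` iff it is transitive on the flags of type `J` and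
`⋂_{j ∈ J} Gᵢ Gⱼ = Gᵢ G_J`. -/
theorem flagTransitive_insert_iff
    {G ι : Type*} [Group G] (Gs : ι → Subgroup G)
    (hgeo : (cosetSystem Gs).IsGeometry)
    (i : ι) (J : Set ι) (hiJ : i ∉ J) :
    flagTransitiveOn Gs (insert i J) ↔
      (flagTransitiveOn Gs J ∧
        (⋂ j ∈ J, (Gs i : Set G) * (Gs j : Set G))
          = (Gs i : Set G) * (interSub Gs J : Set G)) := by
  have incJ : ∀ (c : G) (j j' : ι), (cosetSystem Gs).inc (mkElt Gs j c) (mkElt Gs j' c) :=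
    fun c j j' => inc_mkElt_iff.mpr ⟨1, (Gs j).one_mem, 1, (Gs j').one_mem, by group⟩
  constructor
  · intro hK
    refine ⟨?_, ?_⟩
    · -- transitivity on flags of type J
      intro F F' hF hF' hFt hF't
      obtain ⟨C, ⟨hCflag, hCt⟩, hFC⟩ := hgeo F hF
      obtain ⟨C', ⟨hC'flag, hC't⟩, hF'C⟩ := hgeo F' hF'
      have recover : ∀ (D FD : Set (CosetElt Gs)), (cosetSystem Gs).IsFlag D →
          (cosetSystem Gs).t '' FD = J → FD ⊆ D →
          ∀ x ∈ D, (cosetSystem Gs).t x ∈ J → x ∈ FD := by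
        intro D FD hD hFDt hsub x hxD hxJ
        rw [← hFDt] at hxJ
        obtain ⟨y, hyF, hty⟩ := hxJ
        have := (cosetSystem Gs).eq_of_inc_of_t_eq x y (hD x hxD y (hsub hyF)) hty.symm
        exact this ▸ hyF
      have hFhflag : (cosetSystem Gs).IsFlag {x ∈ C | (cosetSystem Gs).t x ∈ insert i J} :=
        fun x hx y hy => hCflag x hx.1 y hy.1
      have hFh'flag : (cosetSystem Gs).IsFlag {x ∈ C' | (cosetSystem Gs).t x ∈ insert i J} :=
        fun x hx y hy => hC'flag x hx.1 y hy.1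
      have himg : ∀ (D : Set (CosetElt Gs)), (cosetSystem Gs).t '' D = Set.univ →
          (cosetSystem Gs).t '' {x ∈ D | (cosetSystem Gs).t x ∈ insert i J} = insert i J := by
        intro D hD
        apply Set.Subset.antisymm
        · rintro _ ⟨x, hx, rfl⟩; exact hx.2
        · intro k hk
          have : k ∈ (cosetSystem Gs).t '' D := by rw [hD]; trivial
          obtain ⟨x, hxD, hxk⟩ := this
          exact ⟨x, ⟨hxD, by rw [hxk]; exact hk⟩, hxk⟩
      obtain ⟨g, hg⟩ := hK _ _ hFhflag hFh'flag (himg C hCt) (himg C' hC't)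
      refine ⟨g, ?_⟩
      apply Set.Subset.antisymm
      · rintro _ ⟨x, hxF, rfl⟩
        have hxJ : (cosetSystem Gs).t x ∈ J := hFt ▸ Set.mem_image_of_mem _ hxF
        have hxFh : x ∈ {x ∈ C | (cosetSystem Gs).t x ∈ insert i J} :=
          ⟨hFC hxF, Set.mem_insert_of_mem _ hxJ⟩
        have hmem : actElt Gs g x ∈ {x ∈ C' | (cosetSystem Gs).t x ∈ insert i J} :=
          hg ▸ Set.mem_image_of_mem _ hxFh
        exact recover C' F' hC'flag hF't hF'C _ hmem.1 hxJ
      · intro x' hx'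
        have hx'Fh' : x' ∈ {x ∈ C' | (cosetSystem Gs).t x ∈ insert i J} :=
          ⟨hF'C hx', Set.mem_insert_of_mem _ (hF't ▸ Set.mem_image_of_mem _ hx')⟩
        rw [← hg] at hx'Fh'
        obtain ⟨x, hxFh, rfl⟩ := hx'Fh'
        have hxJ : (cosetSystem Gs).t (actElt Gs g x) ∈ J :=
          hF't ▸ Set.mem_image_of_mem _ hx'
        exact Set.mem_image_of_mem _ (recover C F hCflag hFt hFC x hxFh.1 hxJ)
    · -- the intersection condition
      apply Set.Subset.antisymm
      · intro x hx
        have hx' : ∀ j ∈ J, x ∈ (Gs i : Set G) * (Gs j : Set G) :=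
          fun j hj => Set.mem_iInter₂.mp hx j hj
        have hFKflag : (cosetSystem Gs).IsFlag
            (insert (mkElt Gs i 1) {y | ∃ j ∈ J, y = mkElt Gs j 1}) := by
          intro y hy z hz
          simp only [Set.mem_insert_iff, Set.mem_setOf_eq] at hy hz
          rcases hy with rfl | ⟨j, hj, rfl⟩ <;> rcases hz with rfl | ⟨k, hk, rfl⟩
          · exact (cosetSystem Gs).inc_refl _
          · exact incJ 1 i k
          · exact incJ 1 j i
          · exact incJ 1 j k
        have hFxflag : (cosetSystem Gs).IsFlag
            (insert (mkElt Gs i 1) {y | ∃ j ∈ J, y = mkElt Gs j x}) := by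
          intro y hy z hz
          simp only [Set.mem_insert_iff, Set.mem_setOf_eq] at hy hz
          rcases hy with rfl | ⟨j, hj, rfl⟩ <;> rcases hz with rfl | ⟨k, hk, rfl⟩
          · exact (cosetSystem Gs).inc_refl _
          · exact inc_mkElt_iff.mpr (by simpa using hx' k hk)
          · exact (cosetSystem Gs).inc_symm _ _ (inc_mkElt_iff.mpr (by simpa using hx' j hj))
          · exact incJ x j k
        have himgK : ∀ (c : G),
            (cosetSystem Gs).t '' (insert (mkElt Gs i 1) {y | ∃ j ∈ J, y = mkElt Gs j c})
              = insert i J := by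
          intro c
          apply Set.Subset.antisymm
          · rintro _ ⟨y, hy, rfl⟩
            simp only [Set.mem_insert_iff, Set.mem_setOf_eq] at hy
            rcases hy with rfl | ⟨j, hj, rfl⟩
            · exact Set.mem_insert _ _
            · exact Set.mem_insert_of_mem _ hj
          · intro k hk
            rcases Set.mem_insert_iff.mp hk with hk' | hk'
            · exact ⟨mkElt Gs i 1, Set.mem_insert _ _, hk'.symm⟩
            · exact ⟨mkElt Gs k c, Set.mem_insert_of_mem _ ⟨k, hk', rfl⟩, rfl⟩
        obtain ⟨g, hg⟩ := hK _ _ hFKflag hFxflag (himgK 1) (himgK x)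
        have hgi : g ∈ Gs i := by
          have h1 : actElt Gs g (mkElt Gs i 1)
              ∈ insert (mkElt Gs i 1) {y | ∃ j ∈ J, y = mkElt Gs j x} :=
            hg ▸ Set.mem_image_of_mem _ (Set.mem_insert _ _)
          rw [actElt_mkElt, mul_one] at h1
          simp only [Set.mem_insert_iff, Set.mem_setOf_eq] at h1
          rcases h1 with h1 | ⟨j, hj, h1⟩
          · have := mkElt_eq_iff.mp h1
            rw [mul_one] at this
            simpa using (Gs i).inv_mem this
          · have hij : i = j := congrArg (fun z : CosetElt Gs => z.1.1) h1
            exact absurd (hij ▸ hj) (fun hc => hiJ hc)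
        have hgJ : g⁻¹ * x ∈ interSub Gs J := by
          rw [mem_interSub_iff]
          intro j hj
          have h1 : actElt Gs g (mkElt Gs j 1)
              ∈ insert (mkElt Gs i 1) {y | ∃ j ∈ J, y = mkElt Gs j x} :=
            hg ▸ Set.mem_image_of_mem _ (Set.mem_insert_of_mem _ ⟨j, hj, rfl⟩)
          rw [actElt_mkElt, mul_one] at h1
          simp only [Set.mem_insert_iff, Set.mem_setOf_eq] at h1
          rcases h1 with h1 | ⟨j', hj', h1⟩
          · have hji : j = i := congrArg (fun z : CosetElt Gs => z.1.1) h1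
            exact absurd (hji ▸ hj) hiJ
          · have hjj : j = j' := congrArg (fun z : CosetElt Gs => z.1.1) h1
            subst hjj
            exact mkElt_eq_iff.mp h1
        exact ⟨g, hgi, g⁻¹ * x, hgJ, by group⟩
      · rintro z ⟨a, ha, c, hc, rfl⟩
        apply Set.mem_iInter₂.mpr
        intro j hj
        exact ⟨a, ha, c, interSub_le hj hc, rfl⟩
  · rintro ⟨hJt, hint⟩
    intro F F' hF hF' hFt hF't
    have hBflag : (cosetSystem Gs).IsFlag {y | ∃ j ∈ J, y = mkElt Gs j 1} := by
      rintro y ⟨j, hj, rfl⟩ z ⟨k, hk, rfl⟩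
      exact incJ 1 j k
    have hBt : (cosetSystem Gs).t '' {y | ∃ j ∈ J, y = mkElt Gs j 1} = J := by
      apply Set.Subset.antisymm
      · rintro _ ⟨y, ⟨j, hj, rfl⟩, rfl⟩
        exact hj
      · intro j hj
        exact ⟨mkElt Gs j 1, ⟨j, hj, rfl⟩, rfl⟩
    have hpart : ∀ (D : Set (CosetElt Gs)), (cosetSystem Gs).IsFlag D →
        (cosetSystem Gs).t '' D = insert i J →
        (cosetSystem Gs).IsFlag {x ∈ D | (cosetSystem Gs).t x ∈ J} ∧
        (cosetSystem Gs).t '' {x ∈ D | (cosetSystem Gs).t x ∈ J} = J := by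
      intro D hD hDt
      refine ⟨fun x hx y hy => hD x hx.1 y hy.1, Set.Subset.antisymm ?_ ?_⟩
      · rintro _ ⟨x, hx, rfl⟩; exact hx.2
      · intro j hj
        have : j ∈ (cosetSystem Gs).t '' D := by
          rw [hDt]; exact Set.mem_insert_of_mem _ hj
        obtain ⟨x, hxD, hxj⟩ := this
        exact ⟨x, ⟨hxD, by rw [hxj]; exact hj⟩, hxj⟩
    obtain ⟨g₁, hg₁⟩ := hJt _ _ (hpart F hF hFt).1 hBflag (hpart F hF hFt).2 hBt
    obtain ⟨g₂, hg₂⟩ := hJt _ _ (hpart F' hF' hF't).1 hBflag (hpart F' hF' hF't).2 hBt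
    have key : ∀ (D : Set (CosetElt Gs)) (g : G), (cosetSystem Gs).IsFlag D →
        (cosetSystem Gs).t '' D = insert i J →
        actElt Gs g '' {x ∈ D | (cosetSystem Gs).t x ∈ J} = {y | ∃ j ∈ J, y = mkElt Gs j 1} →
        ∃ y : G, actElt Gs g '' D = insert (mkElt Gs i y) {y | ∃ j ∈ J, y = mkElt Gs j 1} ∧
          ∀ j ∈ J, y⁻¹ ∈ (Gs i : Set G) * (Gs j : Set G) := by
      intro D g hD hDt hgB
      have hD₁flag := isFlag_image g hD
      have hD₁t : (cosetSystem Gs).t '' (actElt Gs g '' D) = insert i J := by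
        rw [t_image_act, hDt]
      have hD₁J : {x ∈ actElt Gs g '' D | (cosetSystem Gs).t x ∈ J}
          = {y | ∃ j ∈ J, y = mkElt Gs j 1} := by
        rw [jpart_image, hgB]
      have hi₁ : i ∈ (cosetSystem Gs).t '' (actElt Gs g '' D) := by
        rw [hD₁t]; exact Set.mem_insert _ _
      obtain ⟨x₁, hx₁, htx₁⟩ := hi₁
      obtain ⟨y, hy⟩ := exists_mkElt x₁
      rw [htx₁] at hy
      refine ⟨y, ?_, ?_⟩
      · apply Set.Subset.antisymm
        · intro z hz
          have hzt : (cosetSystem Gs).t z ∈ insert i J := by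
            rw [← hD₁t]; exact Set.mem_image_of_mem _ hz
          rcases Set.mem_insert_iff.mp hzt with hzi | hzJ
          · apply Set.mem_insert_iff.mpr; left
            rw [← hy]
            exact (cosetSystem Gs).eq_of_inc_of_t_eq z x₁ (hD₁flag z hz x₁ hx₁)
              (hzi.trans htx₁.symm)
          · apply Set.mem_insert_iff.mpr; right
            rw [← hD₁J]
            exact ⟨hz, hzJ⟩
        · intro z hz
          rcases Set.mem_insert_iff.mp hz with rfl | hzB
          · exact hy ▸ hx₁
          · have : z ∈ {x ∈ actElt Gs g '' D | (cosetSystem Gs).t x ∈ J} := by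
              rw [hD₁J]; exact hzB
            exact this.1
      · intro j hj
        have hBj : mkElt Gs j 1 ∈ actElt Gs g '' D := by
          have : mkElt Gs j 1 ∈ {x ∈ actElt Gs g '' D | (cosetSystem Gs).t x ∈ J} := by
            rw [hD₁J]; exact ⟨j, hj, rfl⟩
          exact this.1
        have hinc := hD₁flag x₁ hx₁ _ hBj
        rw [hy] at hinc
        have := inc_mkElt_iff.mp hinc
        simpa using this
    obtain ⟨y, hF₁, hy⟩ := key F g₁ hF hFt hg₁
    obtain ⟨y', hF₂, hy'⟩ := key F' g₂ hF' hF't hg₂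
    have hyi : y⁻¹ ∈ (Gs i : Set G) * (interSub Gs J : Set G) := by
      rw [← hint]
      exact Set.mem_iInter₂.mpr hy
    have hy'i : y'⁻¹ ∈ (Gs i : Set G) * (interSub Gs J : Set G) := by
      rw [← hint]
      exact Set.mem_iInter₂.mpr hy'
    obtain ⟨a, ha, c, hc, hac⟩ := hyi
    obtain ⟨a', ha', c', hc', ha'c'⟩ := hy'i
    have hac' : a * c = y⁻¹ := hac
    have ha'c'' : a' * c' = y'⁻¹ := ha'c'
    have hy2 : y = (a * c)⁻¹ := by rw [hac', inv_inv]
    have hy'2 : y' = (a' * c')⁻¹ := by rw [ha'c'', inv_inv]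
    have hcJ : c ∈ interSub Gs J := hc
    have hc'J : c' ∈ interSub Gs J := hc'
    have hhJ : c'⁻¹ * c ∈ interSub Gs J :=
      (interSub Gs J).mul_mem ((interSub Gs J).inv_mem hc'J) hcJ
    have step1 : actElt Gs (c'⁻¹ * c) '' (actElt Gs g₁ '' F) = actElt Gs g₂ '' F' := by
      rw [hF₁, hF₂, Set.image_insert_eq]
      have hBim : ∀ j ∈ J, actElt Gs (c'⁻¹ * c) (mkElt Gs j 1) = mkElt Gs j 1 := by
        intro j hj
        rw [actElt_mkElt, mul_one, mkElt_eq_iff]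
        simpa using (Gs j).inv_mem (interSub_le hj hhJ)
      congr 1
      · rw [actElt_mkElt, mkElt_eq_iff]
        have heq : (c'⁻¹ * c * y)⁻¹ * y' = a * a'⁻¹ := by rw [hy2, hy'2]; group
        rw [heq]
        exact (Gs i).mul_mem ha ((Gs i).inv_mem ha')
      · apply Set.Subset.antisymm
        · rintro _ ⟨w, ⟨j, hj, rfl⟩, rfl⟩
          rw [hBim j hj]
          exact ⟨j, hj, rfl⟩
        · rintro _ ⟨j, hj, rfl⟩
          exact ⟨mkElt Gs j 1, ⟨j, hj, rfl⟩, hBim j hj⟩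
    refine ⟨g₂⁻¹ * (c'⁻¹ * c * g₁), ?_⟩
    calc actElt Gs (g₂⁻¹ * (c'⁻¹ * c * g₁)) '' F
        = actElt Gs g₂⁻¹ '' (actElt Gs (c'⁻¹ * c * g₁) '' F) := (image_act_act _ _ _).symm
      _ = actElt Gs g₂⁻¹ '' (actElt Gs (c'⁻¹ * c) '' (actElt Gs g₁ '' F)) := by
          rw [image_act_act (c'⁻¹ * c) g₁ F]
      _ = actElt Gs g₂⁻¹ '' (actElt Gs g₂ '' F') := by rw [step1]
      _ = actElt Gs (g₂⁻¹ * g₂) '' F' := image_act_act _ _ _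
      _ = F' := by rw [inv_mul_cancel, image_act_one]

end ChiralGeom
end

section
/- Let (G⁺, R) be a C⁺-group of rank 3, so R = {α_1, α_2}, G_0⁺ = ⟨α_1⁻¹α_2⟩, G_1⁺ = ⟨α_2⟩, G_2⁺ = ⟨α_1⟩, and suppose Γ = Γ(G⁺; (G_0⁺, G_1⁺, G_2⁺)) is a geometry. Write α_{12} := α_1⁻¹α_2. Then every element of the residue Γ_{{G_0⁺}} is of the form (α_{12})^k G_1⁺ or (α_{12})^k G_2⁺ for some integer k; for every integer k, (α_{12})^k G_1⁺ is incident both to (α_{12})^k G_2⁺ and to (α_{12})^{k−1} G_2⁺; consequently the incidence graph of Γ_{{G_0⁺}} contains a cycle of length 2·|G_0⁺| visiting all its elements, and in particular Γ_{{G_0⁺}} is connected. -/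
open scoped Pointwise

namespace ChiralGeom

section AuxLemmas

variable {G : Type*} [Group G]

lemma aux_coset_eq_iff {H : Subgroup G} (g h : G) :
    ({g} : Set G) * (H : Set G) = ({h} : Set G) * (H : Set G) ↔ g⁻¹ * h ∈ H := by
  constructor
  · intro e
    have : h ∈ ({g} : Set G) * (H : Set G) := e ▸ mem_singleton_mul_self h
    obtain ⟨g', hg', x, hx, hxe⟩ := this
    rw [Set.mem_singleton_iff] at hg'
    rw [hg'] at hxe
    have : g⁻¹ * h = x := by rw [← hxe]; group
    rw [this]; exact hx
  · intro hm
    apply singleton_mul_subgroup_eq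
    exact ⟨h, ⟨g, rfl, g⁻¹ * h, hm, by group⟩, mem_singleton_mul_self h⟩

variable (α : ℕ → G)

lemma aux_GJc_12 : GJc α {1, 2} = Subgroup.zpowers ((α 1)⁻¹ * α 2) := by
  rw [Subgroup.zpowers_eq_closure]
  apply le_antisymm
  · rw [GJc, Subgroup.closure_le]
    rintro g ⟨i, hi, j, hj, rfl⟩
    have hm : (α 1)⁻¹ * α 2 ∈ Subgroup.closure ({(α 1)⁻¹ * α 2} : Set G) :=
      Subgroup.subset_closure rfl
    rcases hi with rfl | rfl <;> rcases hj with rfl | rfl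
    · simpa using Subgroup.one_mem _
    · exact hm
    · simpa [mul_inv_rev] using Subgroup.inv_mem _ hm
    · simpa using Subgroup.one_mem _
  · rw [Subgroup.closure_le, Set.singleton_subset_iff]
    exact Subgroup.subset_closure ⟨1, by simp, 2, by simp, rfl⟩

lemma aux_GJc_02 (h0 : α 0 = 1) : GJc α {0, 2} = Subgroup.closure {α 2} := by
  apply le_antisymm
  · rw [GJc, Subgroup.closure_le]
    rintro g ⟨i, hi, j, hj, rfl⟩
    have hm : α 2 ∈ Subgroup.closure ({α 2} : Set G) := Subgroup.subset_closure rfl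
    rcases hi with rfl | rfl <;> rcases hj with rfl | rfl
    · simpa using Subgroup.one_mem _
    · simpa [h0] using hm
    · simpa [h0] using Subgroup.inv_mem _ hm
    · simpa using Subgroup.one_mem _
  · rw [Subgroup.closure_le, Set.singleton_subset_iff]
    exact Subgroup.subset_closure ⟨0, by simp, 2, by simp, by rw [h0]; group⟩

lemma aux_GJc_01 (h0 : α 0 = 1) : GJc α {0, 1} = Subgroup.closure {α 1} := by
  apply le_antisymm
  · rw [GJc, Subgroup.closure_le]
    rintro g ⟨i, hi, j, hj, rfl⟩
    have hm : α 1 ∈ Subgroup.closure ({α 1} : Set G) := Subgroup.subset_closure rfl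
    rcases hi with rfl | rfl <;> rcases hj with rfl | rfl
    · simpa using Subgroup.one_mem _
    · simpa [h0] using hm
    · simpa [h0] using Subgroup.inv_mem _ hm
    · simpa using Subgroup.one_mem _
  · rw [Subgroup.closure_le, Set.singleton_subset_iff]
    exact Subgroup.subset_closure ⟨0, by simp, 1, by simp, by rw [h0]; group⟩

lemma aux_GJc_single (i : ℕ) : GJc α {i} = ⊥ := by
  rw [GJc, eq_bot_iff, Subgroup.closure_le]
  rintro g ⟨j, hj, k, hk, rfl⟩
  rw [Set.mem_singleton_iff] at hj hk
  subst hj; subst hk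
  simp [Subgroup.mem_bot]

lemma aux_maxParab_zero : maxParab 3 α 0 = Subgroup.zpowers ((α 1)⁻¹ * α 2) := by
  rw [maxParab, if_pos rfl, Subgroup.zpowers_eq_closure]
  congr 1
  ext g
  constructor
  · rintro ⟨j, h2, h3, rfl⟩
    have : j = 2 := by omega
    subst this; rfl
  · rintro rfl
    exact ⟨2, le_refl 2, by norm_num, rfl⟩

lemma aux_maxParab_one : maxParab 3 α 1 = Subgroup.closure {α 2} := by
  rw [maxParab, if_neg one_ne_zero]
  congr 1
  ext g
  constructor
  · rintro ⟨j, h1, h3, hne, rfl⟩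
    have : j = 2 := by omega
    subst this; rfl
  · rintro rfl
    exact ⟨2, by norm_num, by norm_num, by norm_num, rfl⟩

lemma aux_maxParab_two : maxParab 3 α 2 = Subgroup.closure {α 1} := by
  rw [maxParab, if_neg two_ne_zero]
  congr 1
  ext g
  constructor
  · rintro ⟨j, h1, h3, hne, rfl⟩
    have : j = 1 := by omega
    subst this; rfl
  · rintro rfl
    exact ⟨1, by norm_num, by norm_num, by norm_num, rfl⟩

lemma aux_inter_G1 (hC : IsCPlusGroup 3 α) :
    Subgroup.zpowers ((α 1)⁻¹ * α 2) ⊓ Subgroup.closure {α 2} = ⊥ := by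
  have h := hC.2.2 {1, 2} {0, 2}
    (by rintro x (rfl | rfl) <;> norm_num)
    (by rintro x (rfl | rfl) <;> norm_num)
    ⟨1, by norm_num, 2, by norm_num, by norm_num⟩
    ⟨0, by norm_num, 2, by norm_num, by norm_num⟩
  have hinter : ({1, 2} : Set ℕ) ∩ {0, 2} = {2} := by
    ext x
    simp only [Set.mem_inter_iff, Set.mem_insert_iff, Set.mem_singleton_iff]
    omega
  rw [aux_GJc_12, aux_GJc_02 α hC.1, hinter, aux_GJc_single] at h
  exact h

lemma aux_inter_G2 (hC : IsCPlusGroup 3 α) :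
    Subgroup.zpowers ((α 1)⁻¹ * α 2) ⊓ Subgroup.closure {α 1} = ⊥ := by
  have h := hC.2.2 {1, 2} {0, 1}
    (by rintro x (rfl | rfl) <;> norm_num)
    (by rintro x (rfl | rfl) <;> norm_num)
    ⟨1, by norm_num, 2, by norm_num, by norm_num⟩
    ⟨0, by norm_num, 1, by norm_num, by norm_num⟩
  have hinter : ({1, 2} : Set ℕ) ∩ {0, 1} = {1} := by
    ext x
    simp only [Set.mem_inter_iff, Set.mem_insert_iff, Set.mem_singleton_iff]
    omega
  rw [aux_GJc_12, aux_GJc_01 α hC.1, hinter, aux_GJc_single] at h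
  exact h

end AuxLemmas

/-- For a rank `3` C⁺-group, every element of the residue of `{G₀⁺}`
has the form `α₁₂ᵏ G₁⁺` or `α₁₂ᵏ G₂⁺`; `α₁₂ᵏ G₁⁺` is incident to `α₁₂ᵏ G₂⁺` and to
`α₁₂^{k-1} G₂⁺`; the incidence graph of the residue contains a cycle of length
`2|G₀⁺|` visiting all its elements; in particular the residue is connected. -/
theorem cplus_rank3_rank2_residue_structure
    {G : Type*} [Group G] (α : ℕ → G) (hC : IsCPlusGroup 3 α)
    (hgeo : (cosetSystem (cplusFamily 3 α)).IsGeometry) :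
    (∀ x : (cosetSystem (cplusFamily 3 α)).ResidueElt
        (baseFlag (cplusFamily 3 α) ({0} : Set (Fin 3))),
      ∃ k : ℤ, x.1 = mkElt (cplusFamily 3 α) 1 (((α 1)⁻¹ * α 2) ^ k) ∨
        x.1 = mkElt (cplusFamily 3 α) 2 (((α 1)⁻¹ * α 2) ^ k)) ∧
    (∀ k : ℤ,
      (cosetSystem (cplusFamily 3 α)).inc
        (mkElt (cplusFamily 3 α) 1 (((α 1)⁻¹ * α 2) ^ k))
        (mkElt (cplusFamily 3 α) 2 (((α 1)⁻¹ * α 2) ^ k)) ∧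
      (cosetSystem (cplusFamily 3 α)).inc
        (mkElt (cplusFamily 3 α) 1 (((α 1)⁻¹ * α 2) ^ k))
        (mkElt (cplusFamily 3 α) 2 (((α 1)⁻¹ * α 2) ^ (k - 1)))) ∧
    (∃ f : ZMod (2 * Nat.card (maxParab 3 α 0)) →
        (cosetSystem (cplusFamily 3 α)).ResidueElt
          (baseFlag (cplusFamily 3 α) ({0} : Set (Fin 3))),
      Function.Bijective f ∧
      ∀ m, ((cosetSystem (cplusFamily 3 α)).residue
              (baseFlag (cplusFamily 3 α) ({0} : Set (Fin 3)))).inc (f m) (f (m + 1)) ∧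
        f m ≠ f (m + 1)) ∧
    ((cosetSystem (cplusFamily 3 α)).residue
        (baseFlag (cplusFamily 3 α) ({0} : Set (Fin 3)))).Connected := by
  classical
  set N := 2 * Nat.card (maxParab 3 α 0) with hN
  set Gs := cplusFamily 3 α with hGs
  set a := (α 1)⁻¹ * α 2 with ha
  set n := orderOf a with hn
  -- basic membership facts
  have haG0 : ∀ k : ℤ, a ^ k ∈ maxParab 3 α 0 := by
    intro k
    rw [aux_maxParab_zero]
    exact zpow_mem (Subgroup.mem_zpowers a) k
  have hα2 : (α 2)⁻¹ ∈ Gs 1 := by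
    show (α 2)⁻¹ ∈ maxParab 3 α 1
    rw [aux_maxParab_one]
    exact Subgroup.inv_mem _ (Subgroup.subset_closure rfl)
  have hα1 : (α 1)⁻¹ ∈ Gs 2 := by
    show (α 1)⁻¹ ∈ maxParab 3 α 2
    rw [aux_maxParab_two]
    exact Subgroup.inv_mem _ (Subgroup.subset_closure rfl)
  -- Part 1 : classification of the residue elements
  have part1 : ∀ x : (cosetSystem Gs).ResidueElt (baseFlag Gs ({0} : Set (Fin 3))),
      ∃ k : ℤ, x.1 = mkElt Gs 1 (a ^ k) ∨ x.1 = mkElt Gs 2 (a ^ k) := by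
    rintro ⟨⟨⟨i, S⟩, g, hg⟩, hnotF, hincF⟩
    have hid : idElt Gs 0 ∈ baseFlag Gs ({0} : Set (Fin 3)) := ⟨0, rfl, rfl⟩
    have hinc0 : (S ∩ ((Gs 0 : Subgroup G) : Set G)).Nonempty := hincF _ hid
    obtain ⟨h, hhS, hhG0⟩ := hinc0
    have hh : h ∈ Subgroup.zpowers a := by
      have h1 : h ∈ maxParab 3 α 0 := hhG0
      rwa [aux_maxParab_zero] at h1
    obtain ⟨k, hk⟩ := hh
    have hg' : S = ({g} : Set G) * ((Gs i : Subgroup G) : Set G) := hg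
    have hSet : S = ({a ^ k} : Set G) * ((Gs i : Subgroup G) : Set G) := by
      rw [hg']
      apply singleton_mul_subgroup_eq
      refine ⟨h, ?_, ?_⟩
      · rw [← hg']; exact hhS
      · rw [← hk]; exact mem_singleton_mul_self _
    obtain ⟨iv, hv⟩ := i
    interval_cases iv
    · exfalso
      apply hnotF
      refine ⟨0, rfl, ?_⟩
      exact (cosetSystem Gs).eq_of_inc_of_t_eq _ _ ⟨h, hhS, hhG0⟩ rfl
    · exact ⟨k, Or.inl (Subtype.ext (Prod.ext_iff.mpr ⟨rfl, hSet⟩))⟩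
    · exact ⟨k, Or.inr (Subtype.ext (Prod.ext_iff.mpr ⟨rfl, hSet⟩))⟩
  -- Part 2 : the two incidences
  have inc1 : ∀ k : ℤ, (cosetSystem Gs).inc (mkElt Gs 1 (a ^ k)) (mkElt Gs 2 (a ^ k)) :=
    fun k => ⟨a ^ k, mem_singleton_mul_self _, mem_singleton_mul_self _⟩
  have inc2 : ∀ k : ℤ,
      (cosetSystem Gs).inc (mkElt Gs 1 (a ^ k)) (mkElt Gs 2 (a ^ (k - 1))) := by
    intro k
    refine ⟨a ^ k * (α 2)⁻¹, Set.mul_mem_mul rfl hα2, ?_⟩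
    have he : a ^ k * (α 2)⁻¹ = a ^ (k - 1) * (α 1)⁻¹ := by
      rw [zpow_sub_one, ha]; group
    rw [he]
    exact Set.mul_mem_mul rfl hα1
  -- equality criteria for the cosets
  have hE1 : ∀ p q : ℤ, mkElt Gs 1 (a ^ p) = mkElt Gs 1 (a ^ q) ↔ ((n : ℤ) ∣ q - p) := by
    intro p q
    constructor
    · intro h
      have h2 : (a ^ p)⁻¹ * a ^ q ∈ Gs 1 :=
        (aux_coset_eq_iff _ _).mp (congrArg (fun y : CosetElt Gs => y.1.2) h)
      have h2' : (a ^ p)⁻¹ * a ^ q ∈ Subgroup.closure {α 2} := by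
        rw [← aux_maxParab_one α]; exact h2
      have h4 : a ^ (q - p) = (a ^ p)⁻¹ * a ^ q := by group
      have h5 : a ^ (q - p) ∈ Subgroup.zpowers a ⊓ Subgroup.closure {α 2} :=
        ⟨zpow_mem (Subgroup.mem_zpowers a) _, h4 ▸ h2'⟩
      rw [aux_inter_G1 α hC, Subgroup.mem_bot] at h5
      exact orderOf_dvd_iff_zpow_eq_one.mpr h5
    · intro hdvd
      have h1 : a ^ (q - p) = 1 := orderOf_dvd_iff_zpow_eq_one.mp hdvd
      refine Subtype.ext (Prod.ext_iff.mpr ⟨rfl, (aux_coset_eq_iff _ _).mpr ?_⟩)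
      have h4 : (a ^ p)⁻¹ * a ^ q = a ^ (q - p) := by group
      rw [h4, h1]
      exact Subgroup.one_mem _
  have hE2 : ∀ p q : ℤ, mkElt Gs 2 (a ^ p) = mkElt Gs 2 (a ^ q) ↔ ((n : ℤ) ∣ q - p) := by
    intro p q
    constructor
    · intro h
      have h2 : (a ^ p)⁻¹ * a ^ q ∈ Gs 2 :=
        (aux_coset_eq_iff _ _).mp (congrArg (fun y : CosetElt Gs => y.1.2) h)
      have h2' : (a ^ p)⁻¹ * a ^ q ∈ Subgroup.closure {α 1} := by
        rw [← aux_maxParab_two α]; exact h2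
      have h4 : a ^ (q - p) = (a ^ p)⁻¹ * a ^ q := by group
      have h5 : a ^ (q - p) ∈ Subgroup.zpowers a ⊓ Subgroup.closure {α 1} :=
        ⟨zpow_mem (Subgroup.mem_zpowers a) _, h4 ▸ h2'⟩
      rw [aux_inter_G2 α hC, Subgroup.mem_bot] at h5
      exact orderOf_dvd_iff_zpow_eq_one.mpr h5
    · intro hdvd
      have h1 : a ^ (q - p) = 1 := orderOf_dvd_iff_zpow_eq_one.mp hdvd
      refine Subtype.ext (Prod.ext_iff.mpr ⟨rfl, (aux_coset_eq_iff _ _).mpr ?_⟩)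
      have h4 : (a ^ p)⁻¹ * a ^ q = a ^ (q - p) := by group
      rw [h4, h1]
      exact Subgroup.one_mem _
  have hNe12 : ∀ g h : G, mkElt Gs 1 g ≠ mkElt Gs 2 h := by
    intro g h e
    have h1 : (1 : Fin 3) = 2 := congrArg (fun y : CosetElt Gs => y.1.1) e
    exact absurd h1 (by decide)
  -- cardinality
  have hNn : (N : ℤ) = 2 * (n : ℤ) := by
    rw [hN, hn, ← Nat.card_zpowers a, ← aux_maxParab_zero α]
    push_cast
    ring
  -- the residue elements of the cycle
  have hmkRes : ∀ (i : Fin 3), i ≠ 0 → ∀ k : ℤ,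
      mkElt Gs i (a ^ k) ∉ baseFlag Gs ({0} : Set (Fin 3)) ∧
      ∀ y ∈ baseFlag Gs ({0} : Set (Fin 3)),
        (cosetSystem Gs).inc (mkElt Gs i (a ^ k)) y := by
    intro i hi k
    constructor
    · rintro ⟨j, hj, hEq⟩
      rw [Set.mem_singleton_iff] at hj
      subst hj
      exact hi (congrArg (fun y : CosetElt Gs => y.1.1) hEq)
    · rintro y ⟨j, hj, rfl⟩
      rw [Set.mem_singleton_iff] at hj
      subst hj
      exact ⟨a ^ k, mem_singleton_mul_self _, haG0 k⟩
  set F : ℤ → (cosetSystem Gs).ResidueElt (baseFlag Gs ({0} : Set (Fin 3))) := fun j =>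
    if hj : Even j then ⟨mkElt Gs 1 (a ^ (j / 2)), hmkRes 1 (by decide) _⟩
    else ⟨mkElt Gs 2 (a ^ ((j - 1) / 2)), hmkRes 2 (by decide) _⟩ with hF
  have hFeven : ∀ u : ℤ, (F (2 * u)).1 = mkElt Gs 1 (a ^ u) := by
    intro u
    have he : Even (2 * u) := even_two_mul u
    rw [hF]
    simp only [dif_pos he]
    rw [Int.mul_ediv_cancel_left u (by norm_num : (2 : ℤ) ≠ 0)]
    simp only [he, ↓reduceDIte]
  have hFodd : ∀ u : ℤ, (F (2 * u + 1)).1 = mkElt Gs 2 (a ^ u) := by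
    intro u
    have he : ¬ Even (2 * u + 1) := by rw [Int.even_iff]; omega
    rw [hF]
    simp only [dif_neg he]
    have h1 : (2 * u + 1 - 1 : ℤ) = 2 * u := by ring
    rw [h1, Int.mul_ediv_cancel_left u (by norm_num : (2 : ℤ) ≠ 0)]
    simp only [he, ↓reduceDIte]
  have parity : ∀ j : ℤ, ∃ u : ℤ, j = 2 * u ∨ j = 2 * u + 1 := fun j => ⟨j / 2, by omega⟩
  have hFiff : ∀ j j' : ℤ, F j = F j' ↔ (2 * (n : ℤ)) ∣ j' - j := by
    intro j j'
    obtain ⟨u, hu | hu⟩ := parity j <;> obtain ⟨v, hv | hv⟩ := parity j' <;>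
        subst hu <;> subst hv
    · rw [show F (2 * u) = F (2 * v) ↔ (F (2 * u)).1 = (F (2 * v)).1 from Subtype.ext_iff,
          hFeven, hFeven, hE1,
        show (2 * v - 2 * u : ℤ) = 2 * (v - u) by ring,
        mul_dvd_mul_iff_left (by norm_num : (2 : ℤ) ≠ 0)]
    · constructor
      · intro h
        exfalso
        have h1 := congrArg Subtype.val h
        rw [hFeven, hFodd] at h1
        exact hNe12 _ _ h1
      · intro hd
        exfalso
        have h2 : (2 : ℤ) ∣ (2 * v + 1 - 2 * u) := dvd_trans ⟨n, by ring⟩ hd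
        omega
    · constructor
      · intro h
        exfalso
        have h1 := congrArg Subtype.val h
        rw [hFeven, hFodd] at h1
        exact hNe12 _ _ h1.symm
      · intro hd
        exfalso
        have h2 : (2 : ℤ) ∣ (2 * v - (2 * u + 1)) := dvd_trans ⟨n, by ring⟩ hd
        omega
    · rw [show F (2 * u + 1) = F (2 * v + 1) ↔ (F (2 * u + 1)).1 = (F (2 * v + 1)).1 from
          Subtype.ext_iff, hFodd, hFodd, hE2,
        show (2 * v + 1 - (2 * u + 1) : ℤ) = 2 * (v - u) by ring,
        mul_dvd_mul_iff_left (by norm_num : (2 : ℤ) ≠ 0)]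
  set f : ZMod N → (cosetSystem Gs).ResidueElt (baseFlag Gs ({0} : Set (Fin 3))) :=
    fun m => F (ZMod.cast m) with hf
  have hr : ∀ m : ZMod N, ((ZMod.cast m : ℤ) : ZMod N) = m := ZMod.intCast_rightInverse
  have hcast : ∀ j : ℤ, f ((j : ZMod N)) = F j := by
    intro j
    rw [hf]
    apply (hFiff _ _).mpr
    rw [← hNn]
    exact Int.ModEq.dvd ((ZMod.intCast_eq_intCast_iff _ _ _).mp (hr (j : ZMod N)))
  have hinj : Function.Injective f := by
    intro m m' h
    rw [hf] at h
    have hd := (hFiff _ _).mp h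
    rw [← hNn] at hd
    have : ((ZMod.cast m : ℤ) : ZMod N) = ((ZMod.cast m' : ℤ) : ZMod N) :=
      (ZMod.intCast_eq_intCast_iff _ _ _).mpr (Int.modEq_iff_dvd.mpr hd)
    rwa [hr, hr] at this
  have hsurj : Function.Surjective f := by
    intro x
    obtain ⟨k, hk | hk⟩ := part1 x
    · exact ⟨((2 * k : ℤ) : ZMod N), by rw [hcast]; exact Subtype.ext ((hFeven k).trans hk.symm)⟩
    · exact ⟨((2 * k + 1 : ℤ) : ZMod N),
        by rw [hcast]; exact Subtype.ext ((hFodd k).trans hk.symm)⟩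
  have hstep : ∀ j : ℤ,
      ((cosetSystem Gs).residue (baseFlag Gs ({0} : Set (Fin 3)))).inc (F j) (F (j + 1)) ∧
        F j ≠ F (j + 1) := by
    intro j
    constructor
    · show (cosetSystem Gs).inc (F j).1 (F (j + 1)).1
      obtain ⟨u, hu | hu⟩ := parity j <;> subst hu
      · rw [hFeven, hFodd]
        exact inc1 u
      · have harg : (2 * u + 1 + 1 : ℤ) = 2 * (u + 1) := by ring
        rw [harg, hFodd, hFeven]
        have h2 := inc2 (u + 1)
        rw [show (u + 1 - 1 : ℤ) = u by ring] at h2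
        exact (cosetSystem Gs).inc_symm _ _ h2
    · intro h
      apply (hFiff _ _).mp at h
      have h2 : (2 : ℤ) ∣ (j + 1 - j) := dvd_trans ⟨n, by ring⟩ h
      omega
  have hstepf : ∀ m : ZMod N,
      ((cosetSystem Gs).residue (baseFlag Gs ({0} : Set (Fin 3)))).inc (f m) (f (m + 1)) ∧
        f m ≠ f (m + 1) := by
    intro m
    have hm1 : ((ZMod.cast m + 1 : ℤ) : ZMod N) = m + 1 := by push_cast [hr]; ring
    have h1 : f (m + 1) = F ((ZMod.cast m : ℤ) + 1) := by rw [← hm1, hcast]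
    have h0 : f m = F (ZMod.cast m : ℤ) := rfl
    rw [h0, h1]
    exact hstep _
  have hsymm : Symmetric
      (((cosetSystem Gs).residue (baseFlag Gs ({0} : Set (Fin 3)))).inc) :=
    fun x y h => ((cosetSystem Gs).residue _).inc_symm x y h
  have hchain : ∀ j : ℤ, Relation.ReflTransGen
      (((cosetSystem Gs).residue (baseFlag Gs ({0} : Set (Fin 3)))).inc) (F 0) (F j) := by
    intro j
    induction j using Int.induction_on with
    | zero => exact Relation.ReflTransGen.refl
    | succ i hi => exact hi.tail (hstep i).1
    | pred i hi =>
      have h1 := (hstep (-(i : ℤ) - 1)).1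
      rw [show (-(i : ℤ) - 1 + 1) = -(i : ℤ) by ring] at h1
      exact hi.tail (hsymm h1)
  have hconn : ((cosetSystem Gs).residue (baseFlag Gs ({0} : Set (Fin 3)))).Connected := by
    intro x y
    obtain ⟨m, rfl⟩ := hsurj x
    obtain ⟨m', rfl⟩ := hsurj y
    exact ((@Std.Symm.symm _ _ (@Relation.ReflTransGen.stdSymm _ _ ⟨fun _ _ h => hsymm h⟩)
      _ _ (hchain (ZMod.cast m)))).trans
      (hchain (ZMod.cast m'))
  exact ⟨part1, fun k => ⟨inc1 k, inc2 k⟩, ⟨f, ⟨hinj, hsurj⟩, hstepf⟩, hconn⟩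

end ChiralGeom
end

section
/- Let Γ = Γ(G, (G_i)_{i∈I}) be the coset incidence system of a group G over subgroups (G_i)_{i∈I}. Then for each J ⊆ I, the map φ_J : Γ(G_J, (G_{J∪{i}})_{i∈I∖J}) → Γ_{{G_j : j∈J}} given by φ_J(a G_{J∪{i}}) = a G_i (a ∈ G_J, i ∈ I ∖ J) is a well-defined injective homomorphism of incidence systems over I ∖ J (it preserves types and incidence). Furthermore, φ_J is surjective if and only if for all i ∈ I ∖ J one has ⋂_{j∈J} (G_j G_i) = G_J G_i; and if φ_J is surjective for all J ⊆ I, then φ_J is an isomorphism for all J ⊆ I. -/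
open scoped Pointwise

namespace ChiralGeom

section Aux

variable {G : Type*} [Group G] {ι : Type*}

lemma mem_singleton_mul' {H : Subgroup G} {a b : G} :
    b ∈ ({a} : Set G) * (H : Set G) ↔ a⁻¹ * b ∈ H := by
  constructor
  · rintro ⟨x, hx, h, hh, rfl⟩
    obtain rfl : x = a := hx
    simpa using hh
  · intro h
    exact ⟨a, rfl, a⁻¹ * b, h, by group⟩

lemma singleton_mul_eq_of_mem {H : Subgroup G} {a b : G} (h : a⁻¹ * b ∈ H) :
    ({a} : Set G) * (H : Set G) = ({b} : Set G) * (H : Set G) :=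
  singleton_mul_subgroup_eq ⟨b, mem_singleton_mul'.mpr h, mem_singleton_mul_self b⟩

lemma mem_of_singleton_mul_eq {H : Subgroup G} {a b : G}
    (h : ({a} : Set G) * (H : Set G) = ({b} : Set G) * (H : Set G)) : a⁻¹ * b ∈ H :=
  mem_singleton_mul'.mp (h ▸ mem_singleton_mul_self b)

lemma cosetElt_ext {Gs : ι → Subgroup G} {x y : CosetElt Gs}
    (h1 : x.1.1 = y.1.1) (h2 : x.1.2 = y.1.2) : x = y :=
  Subtype.ext (Prod.ext h1 h2)

lemma cosetElt_rep_spec {Gs : ι → Subgroup G} (x : CosetElt Gs) :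
    x.1.2 = ({x.2.choose} : Set G) * (Gs x.1.1 : Set G) := x.2.choose_spec

lemma interSub_insert (Gs : ι → Subgroup G) (i : ι) (J : Set ι) :
    interSub Gs (insert i J) = Gs i ⊓ interSub Gs J := by
  simp only [interSub]
  rw [iInf_insert]

lemma mem_resFamily {Gs : ι → Subgroup G} {J : Set ι} {i : {i : ι // i ∉ J}}
    {g : interSub Gs J} : g ∈ resFamily Gs J i ↔ (g : G) ∈ Gs i.1 := by
  rw [resFamily, Subgroup.mem_subgroupOf, interSub_insert, Subgroup.mem_inf]
  simp [g.2]

lemma phi_fst {Gs : ι → Subgroup G} (J : Set ι) (x : CosetElt (resFamily Gs J)) :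
    (phi Gs J x).1 = mkElt Gs x.1.1.1 (x.2.choose : G) := rfl

lemma phi_fst_eq {Gs : ι → Subgroup G} (J : Set ι) (x : CosetElt (resFamily Gs J))
    {a : interSub Gs J} (ha : x.1.2 = ({a} : Set (interSub Gs J)) * (resFamily Gs J x.1.1 : Set (interSub Gs J))) :
    (phi Gs J x).1 = mkElt Gs x.1.1.1 (a : G) := by
  rw [phi_fst]
  refine cosetElt_ext rfl ?_
  have h : a⁻¹ * x.2.choose ∈ resFamily Gs J x.1.1 :=
    mem_of_singleton_mul_eq (ha.symm.trans (cosetElt_rep_spec x))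
  have h2 : (a : G)⁻¹ * (x.2.choose : G) ∈ Gs x.1.1.1 := mem_resFamily.mp h
  exact (singleton_mul_eq_of_mem h2).symm

lemma phi_mkElt {Gs : ι → Subgroup G} (J : Set ι) (i : {i : ι // i ∉ J})
    (a : interSub Gs J) :
    (phi Gs J (mkElt (resFamily Gs J) i a)).1 = mkElt Gs i.1 (a : G) :=
  phi_fst_eq J _ rfl

end Aux

section Aux2

variable {G : Type*} [Group G] {ι : Type*}

lemma interSub_mono {Gs : ι → Subgroup G} {J K : Set ι} (h : J ⊆ K) :
    interSub Gs K ≤ interSub Gs J := by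
  intro x hx
  simp only [interSub, Subgroup.mem_iInf] at hx ⊢
  exact fun j hj => hx j (h hj)

lemma phi_injective (Gs : ι → Subgroup G) (J : Set ι) :
    Function.Injective (phi Gs J) := by
  intro x y hxy
  have h1 : (phi Gs J x).1 = (phi Gs J y).1 := congrArg Subtype.val hxy
  rw [phi_fst, phi_fst] at h1
  have hi : x.1.1.1 = y.1.1.1 := congrArg (fun z : CosetElt Gs => z.1.1) h1
  have hii : x.1.1 = y.1.1 := Subtype.ext hi
  have hset : ({(x.2.choose : G)} : Set G) * (Gs x.1.1.1 : Set G)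
      = ({(y.2.choose : G)} : Set G) * (Gs y.1.1.1 : Set G) :=
    congrArg (fun z : CosetElt Gs => z.1.2) h1
  rw [← hi] at hset
  have hmem : (x.2.choose : G)⁻¹ * (y.2.choose : G) ∈ Gs x.1.1.1 :=
    mem_of_singleton_mul_eq hset
  have hmem2 : x.2.choose⁻¹ * y.2.choose ∈ resFamily Gs J x.1.1 :=
    mem_resFamily.mpr (by push_cast; exact hmem)
  refine cosetElt_ext hii ?_
  have hres : resFamily Gs J x.1.1 = resFamily Gs J y.1.1 := by rw [hii]
  rw [cosetElt_rep_spec x, cosetElt_rep_spec y]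
  calc ({x.2.choose} : Set (interSub Gs J)) * (resFamily Gs J x.1.1 : Set (interSub Gs J))
      = ({y.2.choose} : Set (interSub Gs J)) * (resFamily Gs J x.1.1 : Set (interSub Gs J)) :=
        singleton_mul_eq_of_mem hmem2
    _ = ({y.2.choose} : Set (interSub Gs J)) * (resFamily Gs J y.1.1 : Set (interSub Gs J)) :=
        congrArg (fun H : Subgroup (interSub Gs J) =>
          ({y.2.choose} : Set (interSub Gs J)) * (H : Set (interSub Gs J))) hres

lemma phi_inc (Gs : ι → Subgroup G) (J : Set ι) (x y : CosetElt (resFamily Gs J))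
    (h : (cosetSystem (resFamily Gs J)).inc x y) :
    ((cosetSystem Gs).residue (baseFlag Gs J)).inc (phi Gs J x) (phi Gs J y) := by
  obtain ⟨z, hz1, hz2⟩ := h
  rw [cosetElt_rep_spec x] at hz1
  rw [cosetElt_rep_spec y] at hz2
  have h1 : (x.2.choose : G)⁻¹ * (z : G) ∈ Gs x.1.1.1 :=
    mem_resFamily.mp (mem_singleton_mul'.mp hz1 :
      x.2.choose⁻¹ * z ∈ resFamily Gs J x.1.1)
  have h2 : (y.2.choose : G)⁻¹ * (z : G) ∈ Gs y.1.1.1 :=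
    mem_resFamily.mp (mem_singleton_mul'.mp hz2 :
      y.2.choose⁻¹ * z ∈ resFamily Gs J y.1.1)
  exact ⟨(z : G), mem_singleton_mul'.mpr h1, mem_singleton_mul'.mpr h2⟩

lemma residue_type_not_mem (Gs : ι → Subgroup G) (J : Set ι)
    (y : (cosetSystem Gs).ResidueElt (baseFlag Gs J)) : y.1.1.1 ∉ J := by
  intro hy
  have hinc := y.2.2 (idElt Gs y.1.1.1) ⟨y.1.1.1, hy, rfl⟩
  have heq := (cosetSystem Gs).eq_of_inc_of_t_eq _ _ hinc rfl
  exact y.2.1 (heq ▸ ⟨y.1.1.1, hy, rfl⟩)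

lemma phi_surj_iff (Gs : ι → Subgroup G) (J : Set ι) :
    Function.Surjective (phi Gs J) ↔
      ∀ i ∉ J, (⋂ j ∈ J, (Gs j : Set G) * (Gs i : Set G))
        = (interSub Gs J : Set G) * (Gs i : Set G) := by
  constructor
  · intro hsurj i hi
    apply Set.Subset.antisymm
    · intro g hg
      simp only [Set.mem_iInter] at hg
      have hne : mkElt Gs i g ∉ baseFlag Gs J := by
        rintro ⟨j, hj, hEq⟩
        have hij : i = j := congrArg (fun z : CosetElt Gs => z.1.1) hEq
        exact hi (hij ▸ hj)
      have hincid : ∀ z ∈ baseFlag Gs J, (cosetSystem Gs).inc (mkElt Gs i g) z := by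
        rintro z ⟨j, hj, rfl⟩
        obtain ⟨c, hc, h, hh, hch⟩ := hg j hj
        refine ⟨c, mem_singleton_mul'.mpr ?_, hc⟩
        have : g⁻¹ * c = h⁻¹ := by rw [← hch]; group
        exact this ▸ (Gs i).inv_mem hh
      obtain ⟨x, hx⟩ := hsurj ⟨mkElt Gs i g, hne, hincid⟩
      have h1 : (phi Gs J x).1 = mkElt Gs i g := congrArg Subtype.val hx
      rw [phi_fst] at h1
      have hie : x.1.1.1 = i := congrArg (fun z : CosetElt Gs => z.1.1) h1
      have hset : ({(x.2.choose : G)} : Set G) * (Gs x.1.1.1 : Set G)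
          = ({g} : Set G) * (Gs i : Set G) :=
        congrArg (fun z : CosetElt Gs => z.1.2) h1
      rw [hie] at hset
      have hmem := mem_of_singleton_mul_eq hset
      exact ⟨(x.2.choose : G), (x.2.choose).2, _, hmem, by group⟩
    · intro g hg
      obtain ⟨a, ha, h, hh, hah⟩ := hg
      simp only [Set.mem_iInter]
      intro j hj
      exact ⟨a, interSub_le hj ha, h, hh, hah⟩
  · intro hc y
    have hiy : y.1.1.1 ∉ J := residue_type_not_mem Gs J y
    have hgspec : y.1.1.2 = ({y.1.2.choose} : Set G) * (Gs y.1.1.1 : Set G) :=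
      y.1.2.choose_spec
    have hgmem : y.1.2.choose ∈ ⋂ j ∈ J, (Gs j : Set G) * (Gs y.1.1.1 : Set G) := by
      simp only [Set.mem_iInter]
      intro j hj
      obtain ⟨z, hz1, hz2⟩ := y.2.2 (idElt Gs j) ⟨j, hj, rfl⟩
      rw [hgspec] at hz1
      have hz3 := mem_singleton_mul'.mp hz1
      exact ⟨z, hz2, (y.1.2.choose⁻¹ * z)⁻¹, (Gs _).inv_mem hz3, by group⟩
    rw [hc y.1.1.1 hiy] at hgmem
    obtain ⟨a, ha, h, hh, hah⟩ := hgmem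
    refine ⟨mkElt (resFamily Gs J) ⟨y.1.1.1, hiy⟩ ⟨a, ha⟩, ?_⟩
    apply Subtype.ext
    rw [phi_mkElt]
    refine cosetElt_ext rfl ?_
    rw [hgspec]
    exact singleton_mul_eq_of_mem
      (show a⁻¹ * y.1.2.choose ∈ Gs y.1.1.1 by rw [← hah, inv_mul_cancel_left]; exact hh)

lemma phi_inc_rev (Gs : ι → Subgroup G)
    (hall : ∀ J : Set ι, Function.Surjective (phi Gs J)) (J : Set ι)
    (x y : CosetElt (resFamily Gs J))
    (h : ((cosetSystem Gs).residue (baseFlag Gs J)).inc (phi Gs J x) (phi Gs J y)) :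
    (cosetSystem (resFamily Gs J)).inc x y := by
  by_cases hii : x.1.1.1 = y.1.1.1
  · have hpeq : phi Gs J x = phi Gs J y :=
      ((cosetSystem Gs).residue (baseFlag Gs J)).eq_of_inc_of_t_eq _ _ h (Subtype.ext hii)
    rw [phi_injective Gs J hpeq]
    exact (cosetSystem (resFamily Gs J)).inc_refl y
  · obtain ⟨z, hz1, hz2⟩ := h
    have h1 : (x.2.choose : G)⁻¹ * z ∈ Gs x.1.1.1 := mem_singleton_mul'.mp hz1
    have h2 : (y.2.choose : G)⁻¹ * z ∈ Gs y.1.1.1 := mem_singleton_mul'.mp hz2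
    set gx := x.2.choose with hgxd
    set gy := y.2.choose with hgyd
    have hiJ' : x.1.1.1 ∉ insert y.1.1.1 J := by
      simp only [Set.mem_insert_iff]
      push_neg
      exact ⟨hii, x.1.1.2⟩
    have hcond := (phi_surj_iff Gs (insert y.1.1.1 J)).mp (hall _) x.1.1.1 hiJ'
    have hmem : (gy : G)⁻¹ * gx ∈ ⋂ j ∈ insert y.1.1.1 J,
        (Gs j : Set G) * (Gs x.1.1.1 : Set G) := by
      simp only [Set.mem_iInter, Set.mem_insert_iff]
      rintro j (rfl | hj)
      · exact ⟨(gy : G)⁻¹ * z, h2, ((gx : G)⁻¹ * z)⁻¹, (Gs _).inv_mem h1, by group⟩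
      · exact ⟨(gy : G)⁻¹ * gx, interSub_le hj (gy⁻¹ * gx : interSub Gs J).2
          , 1, (Gs _).one_mem, by group⟩
    rw [hcond] at hmem
    obtain ⟨v, hv, u, hu, hvu⟩ := hmem
    replace hvu : v * u = (gy : G)⁻¹ * gx := hvu
    have huJ : u ∈ interSub Gs J := by
      have : u = v⁻¹ * ((gy : G)⁻¹ * gx) := by rw [← hvu]; group
      rw [this]
      exact (interSub Gs J).mul_mem
        ((interSub Gs J).inv_mem (interSub_mono (Set.subset_insert _ _) hv))
        ((interSub Gs J).mul_mem ((interSub Gs J).inv_mem gy.2) gx.2)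
    set u' : interSub Gs J := ⟨u, huJ⟩ with hu'd
    refine ⟨gx * u'⁻¹, ?_, ?_⟩
    · rw [cosetElt_rep_spec x]
      refine mem_singleton_mul'.mpr (mem_resFamily.mpr ?_)
      have : (↑(gx⁻¹ * (gx * u'⁻¹)) : G) = u⁻¹ := by push_cast [hu'd]; group
      rw [← hgxd, this]
      exact (Gs _).inv_mem hu
    · rw [cosetElt_rep_spec y]
      refine mem_singleton_mul'.mpr (mem_resFamily.mpr ?_)
      have : (↑(gy⁻¹ * (gx * u'⁻¹)) : G) = v := by
        push_cast [hu'd]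
        rw [show (v : G) = (v * u) * u⁻¹ by group, hvu]
        group
      rw [← hgyd, this]
      exact interSub_le (Set.mem_insert _ _) hv

end Aux2

/-- (Lemma 1.8.9 of Buekenhout–Cohen) The natural map
`φ_J (a G_{J∪{i}}) = a Gᵢ` is an injective homomorphism of incidence systems over
`I ∖ J`; it is surjective iff `⋂_{j∈J} Gⱼ Gᵢ = G_J Gᵢ` for all `i ∈ I ∖ J`; and if
`φ_J` is surjective for all `J`, then `φ_J` is an isomorphism for all `J`. -/
theorem phi_injective_homomorphism_and_surjectivity
    {G ι : Type*} [Group G] (Gs : ι → Subgroup G) :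
    (∀ (J : Set ι) (i : {i : ι // i ∉ J}) (a : interSub Gs J),
        (phi Gs J (mkElt (resFamily Gs J) i a)).1 = mkElt Gs i.1 (a : G)) ∧
    (∀ J : Set ι, Function.Injective (phi Gs J)) ∧
    (∀ (J : Set ι) (x : CosetElt (resFamily Gs J)),
        (cosetSystem Gs).t (phi Gs J x).1 = (x.1.1 : ι)) ∧
    (∀ (J : Set ι) (x y : CosetElt (resFamily Gs J)),
        (cosetSystem (resFamily Gs J)).inc x y →
          ((cosetSystem Gs).residue (baseFlag Gs J)).inc (phi Gs J x) (phi Gs J y)) ∧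
    (∀ J : Set ι, Function.Surjective (phi Gs J) ↔
        ∀ i ∉ J, (⋂ j ∈ J, (Gs j : Set G) * (Gs i : Set G))
          = (interSub Gs J : Set G) * (Gs i : Set G)) ∧
    ((∀ J : Set ι, Function.Surjective (phi Gs J)) →
      ∀ J : Set ι, Function.Bijective (phi Gs J) ∧
        ∀ x y : CosetElt (resFamily Gs J),
          (cosetSystem (resFamily Gs J)).inc x y ↔
            ((cosetSystem Gs).residue (baseFlag Gs J)).inc (phi Gs J x) (phi Gs J y)) := by
  exact ⟨fun J i a => phi_mkElt J i a, fun J => phi_injective Gs J, fun J x => rfl,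
    fun J x y h => phi_inc Gs J x y h, fun J => phi_surj_iff Gs J,
    fun hall J => ⟨⟨phi_injective Gs J, hall J⟩,
      fun x y => ⟨phi_inc Gs J x y, phi_inc_rev Gs hall J x y⟩⟩⟩

end ChiralGeom
end

section
/- Let Γ = Γ(G, (G_i)_{i∈I}) be the coset incidence system of a group G over subgroups (G_i)_{i∈I}. For every singleton J = {j} with j ∈ I, the natural homomorphism φ_{{j}} : Γ(G_j, (G_{{j}∪{i}})_{i∈I∖{j}}) → Γ_{{G_j}}, sending a G_{{j,i}} to a G_i for a ∈ G_j, is a bijective homomorphism of incidence systems. -/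
open scoped Pointwise

namespace ChiralGeom

section Helpers

variable {G : Type*} [Group G] {ι : Type*}

lemma coset_eq_of_mem {H : Subgroup G} {g a : G}
    (ha : a ∈ ({g} : Set G) * (H : Set G)) :
    ({a} : Set G) * (H : Set G) = ({g} : Set G) * (H : Set G) :=
  singleton_mul_subgroup_eq ⟨a, mem_singleton_mul_self a, ha⟩

lemma choose_mem (Gs : ι → Subgroup G) (x : CosetElt Gs) :
    (x.2.choose : G) ∈ x.1.2 := by
  exact x.2.choose_spec.symm.subset (mem_singleton_mul_self _)

/-- For any representative `a ∈ x.1.2`, the coset of `phi x` equals `a * G_i`. -/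
lemma phi_coset (Gs : ι → Subgroup G) (J : Set ι)
    (x : CosetElt (resFamily Gs J)) (a : interSub Gs J) (ha : a ∈ x.1.2) :
    (phi Gs J x).1.1.2 = ({(a : G)} : Set G) * (Gs x.1.1.1 : Set G) := by
  have hspec := x.2.choose_spec
  set c := x.2.choose with hc
  -- a ∈ {c} * H'
  rw [hspec] at ha
  obtain ⟨c', hc', h, hh, hceq⟩ := Set.mem_mul.mp ha
  obtain rfl : c = c' := hc'.symm
  have hhmem : (h : G) ∈ Gs x.1.1.1 := by
    have : (h : G) ∈ interSub Gs (insert x.1.1.1 J) := hh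
    exact interSub_le (Set.mem_insert _ _) this
  have hmem : (a : G) ∈ ({(c : G)} : Set G) * (Gs x.1.1.1 : Set G) := by
    refine ⟨(c : G), rfl, (h : G), hhmem, ?_⟩
    show (c : G) * (h : G) = (a : G)
    exact_mod_cast congrArg Subtype.val hceq
  show ({(c : G)} : Set G) * (Gs x.1.1.1 : Set G) = _
  exact (coset_eq_of_mem hmem).symm

lemma phi_type (Gs : ι → Subgroup G) (J : Set ι)
    (x : CosetElt (resFamily Gs J)) : (phi Gs J x).1.1.1 = (x.1.1.1 : ι) := rfl

lemma mem_interSub_singleton {Gs : ι → Subgroup G} {j : ι} {a : G} :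
    a ∈ interSub Gs ({j} : Set ι) ↔ a ∈ Gs j := by
  simp [interSub]

lemma mem_interSub_insert {Gs : ι → Subgroup G} {i j : ι} {a : G} :
    a ∈ interSub Gs (insert i ({j} : Set ι)) ↔ a ∈ Gs i ∧ a ∈ Gs j := by
  simp [interSub, Subgroup.mem_iInf]

end Helpers

/-- For a singleton `J = {j}`, the natural homomorphism `φ_{{j}}`
is a bijective homomorphism of incidence systems. -/
theorem phi_singleton_bijective_homomorphism
    {G ι : Type*} [Group G] (Gs : ι → Subgroup G) (j : ι) :
    Function.Bijective (phi Gs ({j} : Set ι)) ∧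
    (∀ x : CosetElt (resFamily Gs ({j} : Set ι)),
        (cosetSystem Gs).t (phi Gs ({j} : Set ι) x).1 = (x.1.1 : ι)) ∧
    (∀ x y : CosetElt (resFamily Gs ({j} : Set ι)),
        (cosetSystem (resFamily Gs ({j} : Set ι))).inc x y →
          ((cosetSystem Gs).residue (baseFlag Gs ({j} : Set ι))).inc
            (phi Gs ({j} : Set ι) x) (phi Gs ({j} : Set ι) y)) := by
  refine ⟨⟨?inj, ?surj⟩, fun x => rfl, ?inc⟩
  case inj =>
    intro x y hxy
    obtain ⟨⟨ix, Sx⟩, gx, hgx⟩ := x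
    obtain ⟨⟨iy, Sy⟩, gy, hgy⟩ := y
    have hty : (ix : ι) = (iy : ι) := by
      have := congrArg (fun z : (cosetSystem Gs).ResidueElt (baseFlag Gs ({j} : Set ι)) => z.1.1.1) hxy
      simpa [phi_type] using this
    obtain rfl : ix = iy := Subtype.ext hty
    have hgxm : gx ∈ Sx := hgx.symm.subset (mem_singleton_mul_self _)
    have hgym : gy ∈ Sy := hgy.symm.subset (mem_singleton_mul_self _)
    have hcx := phi_coset Gs ({j} : Set ι) ⟨(ix, Sx), gx, hgx⟩ gx hgxm
    have hcy := phi_coset Gs ({j} : Set ι) ⟨(ix, Sy), gy, hgy⟩ gy hgym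
    have hsets : ({(gx : G)} : Set G) * (Gs ix : Set G)
        = ({(gy : G)} : Set G) * (Gs ix : Set G) := by
      rw [← hcx, ← hcy]
      exact congrArg (fun z : (cosetSystem Gs).ResidueElt (baseFlag Gs ({j} : Set ι)) => z.1.1.2) hxy
    have hgymem : (gy : G) ∈ ({(gx : G)} : Set G) * (Gs ix : Set G) :=
      hsets ▸ mem_singleton_mul_self _
    obtain ⟨g', hg', u, hu, huv⟩ := Set.mem_mul.mp hgymem
    obtain rfl : (gx : G) = g' := hg'.symm
    have hh : gx⁻¹ * gy ∈ resFamily Gs ({j} : Set ι) ix := by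
      rw [resFamily, Subgroup.mem_subgroupOf]
      rw [mem_interSub_insert]
      constructor
      · have : ((gx⁻¹ * gy : interSub Gs ({j} : Set ι)) : G) = u := by
          push_cast
          rw [← huv]
          group
        rw [this]; exact hu
      · exact mem_interSub_singleton.mp (gx⁻¹ * gy).2
    have hgymem' : gy ∈ ({gx} : Set (interSub Gs ({j} : Set ι)))
        * (resFamily Gs ({j} : Set ι) ix : Set (interSub Gs ({j} : Set ι))) :=
      ⟨gx, rfl, gx⁻¹ * gy, hh, by group⟩
    have : Sx = Sy := by
      rw [show Sx = _ from hgx, show Sy = _ from hgy, coset_eq_of_mem hgymem']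
    exact Subtype.ext (Prod.ext rfl this)
  case surj =>
    intro y
    obtain ⟨⟨⟨i, S⟩, g, hS⟩, hnot, hincm⟩ := y
    have hbase : idElt Gs j ∈ baseFlag Gs ({j} : Set ι) := ⟨j, rfl, rfl⟩
    obtain ⟨a, haS, haj⟩ := hincm _ hbase
    have haj' : a ∈ Gs j := haj
    have haI : a ∈ interSub Gs ({j} : Set ι) := mem_interSub_singleton.mpr haj'
    have hSa : S = ({a} : Set G) * (Gs i : Set G) :=
      hS.trans (coset_eq_of_mem (hS ▸ haS)).symm
    have hij : i ∉ ({j} : Set ι) := by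
      intro hi
      rw [Set.mem_singleton_iff] at hi
      subst hi
      apply hnot
      refine ⟨i, rfl, Subtype.ext (Prod.ext rfl ?_)⟩
      show S = (Gs i : Set G)
      have h1 : a ∈ ({(1 : G)} : Set G) * (Gs i : Set G) := ⟨1, rfl, a, haj', one_mul a⟩
      rw [hSa, coset_eq_of_mem h1, Set.singleton_one, one_mul]
    refine ⟨⟨(⟨i, hij⟩, ({(⟨a, haI⟩ : interSub Gs ({j} : Set ι))} : Set (interSub Gs ({j} : Set ι)))
      * (resFamily Gs ({j} : Set ι) ⟨i, hij⟩ : Set (interSub Gs ({j} : Set ι)))),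
      ⟨a, haI⟩, rfl⟩, ?_⟩
    apply Subtype.ext
    apply Subtype.ext
    refine Prod.ext rfl ?_
    show _ = S
    rw [phi_coset Gs ({j} : Set ι) _ ⟨a, haI⟩ (mem_singleton_mul_self _)]
    exact hSa.symm
  case inc =>
    intro x y ⟨c, hcx, hcy⟩
    refine ⟨(c : G), ?_, ?_⟩
    · rw [phi_coset Gs _ x c hcx]; exact mem_singleton_mul_self _
    · rw [phi_coset Gs _ y c hcy]; exact mem_singleton_mul_self _

end ChiralGeom
end

section
/- (Tits) Let n be a positive integer, I := {0, …, n−1}, G a group and (G_i)_{i∈I} a family of subgroups of G. Let X be the set of all cosets G_i g with g ∈ G and i ∈ I, define t : X → I by t(G_i g) = i, and define incidence by G_i g₁ * G_j g₂ iff G_i g₁ ∩ G_j g₂ ≠ ∅. Then Γ := (X, *, t, I) is an incidence system having a chamber; G acts by right multiplication on Γ as a group of type-preserving automorphisms; and G is transitive on the flags of Γ of rank less than 3. -/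
open scoped Pointwise

namespace ChiralGeom

section Tits

variable {G : Type*} [Group G] {ι : Type*}

/-- The elements of Tits' coset incidence system: pairs `(i, S)` where `S` is a
right coset `Gᵢ g`. -/
abbrev CosetEltR (Gs : ι → Subgroup G) : Type _ :=
  {p : ι × Set G // ∃ g : G, p.2 = (Gs p.1 : Set G) * ({g} : Set G)}

lemma subgroup_mul_singleton_eq {H : Subgroup G} {a b : G}
    (h : (((H : Set G) * ({a} : Set G)) ∩ ((H : Set G) * ({b} : Set G))).Nonempty) :
    (H : Set G) * ({a} : Set G) = (H : Set G) * ({b} : Set G) := by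
  obtain ⟨x, hx1, hx2⟩ := h
  obtain ⟨h1, hh1, a', ha', hxa⟩ := Set.mem_mul.mp hx1
  obtain ⟨h2, hh2, b', hb', hxb⟩ := Set.mem_mul.mp hx2
  clear hx1 hx2
  obtain rfl : a = a' := ha'.symm
  obtain rfl : b = b' := hb'.symm
  have key : h1 * a = h2 * b := hxa.trans hxb.symm
  have e1 : h1 * (a * b⁻¹) = h2 := by rw [← mul_assoc, key, mul_assoc, mul_inv_cancel, mul_one]
  have e : a * b⁻¹ = h1⁻¹ * h2 := by rw [← e1]; group
  have hab : a * b⁻¹ ∈ H := e ▸ H.mul_mem (H.inv_mem hh1) hh2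
  ext y
  simp only [Set.mem_mul, Set.mem_singleton_iff]
  constructor
  · rintro ⟨z, hz, w, hw, hy⟩
    refine ⟨z * (a * b⁻¹), H.mul_mem hz hab, b, rfl, ?_⟩
    rw [← hy, hw]; group
  · rintro ⟨z, hz, w, hw, hy⟩
    refine ⟨z * (b * a⁻¹), H.mul_mem hz (by simpa using H.inv_mem hab), a, rfl, ?_⟩
    rw [← hy, hw]; group

/-- Tits' coset incidence system `Γ(G; (Gᵢ)_{i ∈ ι})` with right cosets `Gᵢ g`. -/
def cosetSystemR (Gs : ι → Subgroup G) : IncidenceSystem (CosetEltR Gs) ι where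
  t p := p.1.1
  inc p q := (p.1.2 ∩ q.1.2).Nonempty
  inc_refl p := by
    obtain ⟨g, hg⟩ := p.2
    exact ⟨g, by
      rw [Set.inter_self, hg]
      exact ⟨1, (Gs p.1.1).one_mem, g, rfl, one_mul g⟩⟩
  inc_symm p q h := by
    obtain ⟨x, hx1, hx2⟩ := h
    exact ⟨x, hx2, hx1⟩
  eq_of_inc_of_t_eq p q h ht := by
    obtain ⟨a, ha⟩ := p.2
    obtain ⟨b, hb⟩ := q.2
    have ht' : p.1.1 = q.1.1 := ht
    apply Subtype.ext
    apply Prod.ext ht'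
    show p.1.2 = q.1.2
    have hb2 : q.1.2 = (Gs p.1.1 : Set G) * ({b} : Set G) := by rw [hb, ht']
    rw [ha, hb2]
    apply subgroup_mul_singleton_eq
    rw [← ha, ← hb2]
    exact h

/-- The action of `g ∈ G` on Tits' coset incidence system by right multiplication. -/
def actEltR (Gs : ι → Subgroup G) (g : G) (x : CosetEltR Gs) : CosetEltR Gs :=
  ⟨(x.1.1, x.1.2 * ({g} : Set G)), by
    obtain ⟨a, ha⟩ := x.2
    exact ⟨a * g, by rw [ha, mul_assoc, Set.singleton_mul_singleton]⟩⟩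

lemma mem_self_mul_singleton' {H : Subgroup G} (c : G) :
    c ∈ (H : Set G) * ({c} : Set G) :=
  ⟨1, H.one_mem, c, rfl, one_mul c⟩

lemma coset_eq_of_mem' {Gs : ι → Subgroup G} (x : CosetEltR Gs) {c : G} (hc : c ∈ x.1.2) :
    x.1.2 = (Gs x.1.1 : Set G) * ({c} : Set G) := by
  obtain ⟨a, ha⟩ := x.2
  rw [ha]
  exact subgroup_mul_singleton_eq ⟨c, ha ▸ hc, mem_self_mul_singleton' c⟩

lemma actEltR_actEltR {Gs : ι → Subgroup G} (g h : G) (x : CosetEltR Gs) :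
    actEltR Gs h (actEltR Gs g x) = actEltR Gs (g * h) x := by
  apply Subtype.ext
  show ((x.1.1, x.1.2 * ({g} : Set G) * ({h} : Set G)) : ι × Set G)
    = (x.1.1, x.1.2 * ({g * h} : Set G))
  rw [mul_assoc, Set.singleton_mul_singleton]

lemma actEltR_one' {Gs : ι → Subgroup G} (x : CosetEltR Gs) : actEltR Gs 1 x = x := by
  apply Subtype.ext
  show ((x.1.1, x.1.2 * ({(1 : G)} : Set G)) : ι × Set G) = x.1
  rw [Set.singleton_one, mul_one]

lemma mul_singleton_inter_nonempty {A B : Set G} (g : G) :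
    ((A * ({g} : Set G)) ∩ (B * ({g} : Set G))).Nonempty ↔ (A ∩ B).Nonempty := by
  constructor
  · rintro ⟨z, hz1, hz2⟩
    obtain ⟨a, ha, w, hw, rfl⟩ := hz1
    obtain ⟨b, hb, w', hw', he⟩ := hz2
    rw [Set.mem_singleton_iff] at hw hw'
    subst hw; subst hw'
    have : b = a := mul_right_cancel he
    exact ⟨a, ha, this ▸ hb⟩
  · rintro ⟨a, ha, hb⟩
    exact ⟨a * g, ⟨a, ha, g, rfl, rfl⟩, ⟨a, hb, g, rfl, rfl⟩⟩

lemma exists_common_point {Gs : ι → Subgroup G} {F : Set (CosetEltR Gs)}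
    (hF : (cosetSystemR Gs).IsFlag F) (hfin : F.Finite) (hcard : F.ncard < 3)
    (hne : F.Nonempty) : ∃ c : G, ∀ x ∈ F, c ∈ x.1.2 := by
  obtain ⟨x, hx⟩ := hne
  by_cases h : ∃ y ∈ F, y ≠ x
  · obtain ⟨y, hy, hyx⟩ := h
    obtain ⟨c, hcx, hcy⟩ : (x.1.2 ∩ y.1.2).Nonempty := hF x hx y hy
    refine ⟨c, fun z hz => ?_⟩
    by_cases hzx : z = x
    · exact hzx ▸ hcx
    by_cases hzy : z = y
    · exact hzy ▸ hcy
    exfalso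
    have hsub : ({z, x, y} : Set (CosetEltR Gs)) ⊆ F := by
      rintro w (rfl | rfl | rfl) <;> assumption
    have h3 : ({z, x, y} : Set (CosetEltR Gs)).ncard = 3 := by
      rw [Set.ncard_insert_of_notMem (by simp [hzx, hzy]) (Set.toFinite _),
        Set.ncard_pair hyx.symm]
    have := Set.ncard_le_ncard hsub hfin
    omega
  · push_neg at h
    obtain ⟨a, ha⟩ := x.2
    refine ⟨a, fun z hz => ?_⟩
    rw [h z hz, ha]
    exact mem_self_mul_singleton' a

/-- (Tits, 1956) For a group `G` with subgroups `(Gᵢ)_{i ∈ I}`,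
`I = {0, …, n-1}`, `n > 0`: the coset incidence system (on the right cosets `Gᵢ g`,
where `Gᵢ g₁` and `Gⱼ g₂` are incident iff they meet) has a chamber; `G` acts on it
by right multiplication as type-preserving automorphisms; and `G` is transitive on
the flags of rank less than `3`. -/
theorem tits_coset_incidence_system
    {G : Type*} [Group G] (n : ℕ) (hn : 0 < n) (Gs : Fin n → Subgroup G) :
    (∃ C : Set (CosetEltR Gs), (cosetSystemR Gs).IsChamber C) ∧
    (∀ g : G, ∃ e : Equiv.Perm (CosetEltR Gs),
      (∀ x, e x = actEltR Gs g x) ∧ (cosetSystemR Gs).IsAut e) ∧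
    (∀ F F' : Set (CosetEltR Gs), (cosetSystemR Gs).IsFlag F → (cosetSystemR Gs).IsFlag F' →
      (cosetSystemR Gs).t '' F = (cosetSystemR Gs).t '' F' →
      ((cosetSystemR Gs).t '' F).ncard < 3 →
      ∃ g : G, (actEltR Gs g) '' F = F') := by
  refine ⟨?_, ?_, ?_⟩
  · -- chamber
    refine ⟨Set.range (fun i : Fin n => (⟨(i, (Gs i : Set G)), ⟨1, by
        rw [Set.singleton_one, mul_one]⟩⟩ : CosetEltR Gs)), ?_, ?_⟩
    · rintro x ⟨i, rfl⟩ y ⟨j, rfl⟩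
      exact ⟨1, (Gs i).one_mem, (Gs j).one_mem⟩
    · ext i
      simp only [Set.mem_univ, iff_true]
      exact ⟨_, ⟨i, rfl⟩, rfl⟩
  · -- action by automorphisms
    intro g
    refine ⟨⟨actEltR Gs g, actEltR Gs g⁻¹, fun x => ?_, fun x => ?_⟩, fun x => rfl, ?_, ?_⟩
    · rw [actEltR_actEltR, mul_inv_cancel, actEltR_one']
    · rw [actEltR_actEltR, inv_mul_cancel, actEltR_one']
    · intro x y
      exact (mul_singleton_inter_nonempty g).symm
    · intro x
      rfl
  · -- flag transitivity in rank < 3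
    intro F F' hF hF' hts hlt
    by_cases hne : F.Nonempty
    · have hne' : F'.Nonempty := by
        rw [← Set.image_nonempty (f := (cosetSystemR Gs).t), ← hts,
          Set.image_nonempty]
        exact hne
      have hinj : Set.InjOn (cosetSystemR Gs).t F := fun x hx y hy ht =>
        (cosetSystemR Gs).eq_of_inc_of_t_eq x y (hF x hx y hy) ht
      have hinj' : Set.InjOn (cosetSystemR Gs).t F' := fun x hx y hy ht =>
        (cosetSystemR Gs).eq_of_inc_of_t_eq x y (hF' x hx y hy) ht
      have hfinI : ((cosetSystemR Gs).t '' F).Finite := Set.toFinite _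
      have hfin : F.Finite := Set.Finite.of_finite_image hfinI hinj
      have hfin' : F'.Finite :=
        Set.Finite.of_finite_image (hts ▸ hfinI) hinj'
      have hcard : F.ncard < 3 := by
        rwa [← Set.ncard_image_of_injOn hinj]
      have hcard' : F'.ncard < 3 := by
        rwa [← Set.ncard_image_of_injOn hinj', ← hts]
      obtain ⟨c, hc⟩ := exists_common_point hF hfin hcard hne
      obtain ⟨c', hc'⟩ := exists_common_point hF' hfin' hcard' hne'
      refine ⟨c⁻¹ * c', ?_⟩
      have key : ∀ x ∈ F, ∀ y ∈ F', x.1.1 = y.1.1 → actEltR Gs (c⁻¹ * c') x = y := by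
        intro x hx y hy hxy
        apply Subtype.ext
        refine Prod.ext_iff.mpr ⟨hxy, ?_⟩
        show x.1.2 * ({c⁻¹ * c'} : Set G) = y.1.2
        rw [coset_eq_of_mem' x (hc x hx), coset_eq_of_mem' y (hc' y hy),
          mul_assoc, Set.singleton_mul_singleton, mul_inv_cancel_left, hxy]
      ext y
      constructor
      · rintro ⟨x, hx, rfl⟩
        have : (cosetSystemR Gs).t x ∈ (cosetSystemR Gs).t '' F' :=
          hts ▸ ⟨x, hx, rfl⟩
        obtain ⟨y, hy, hty⟩ := this
        rw [key x hx y hy hty.symm]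
        exact hy
      · intro hy
        have : (cosetSystemR Gs).t y ∈ (cosetSystemR Gs).t '' F :=
          hts.symm ▸ ⟨y, hy, rfl⟩
        obtain ⟨x, hx, htx⟩ := this
        exact ⟨x, hx, key x hx y hy htx⟩
    · rw [Set.not_nonempty_iff_eq_empty] at hne
      subst hne
      have : F' = ∅ := by
        rw [← Set.image_eq_empty (f := (cosetSystemR Gs).t), ← hts,
          Set.image_empty]
      exact ⟨1, by rw [this, Set.image_empty]⟩

end Tits

end ChiralGeom
end
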